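/- arXiv:2204.13619 — 3 statements merged into one kernel-verified Lean document; each statement's English description precedes it below -/
import Mathlib

section
/- The global regularizer φ(θ) = (1/2) Σ_{j=1}^k α_j Σ_{i∈I_j} γ_i ‖θ_i − θ̄‖² is convex as a function of θ = (θ_1,…,θ_n) ∈ (ℝ^d)^n, and it is (max_{j=1,…,k} max_{i∈I_j} α_j γ_i)-smooth, i.e., its gradient with respect to θ is Lipschitz with constant max_{j=1,…,k} max_{i∈I_j} α_j γ_i. -/
open scoped BigOperators

noncomputable section

/-- `E d` is the Euclidean space ℝ^d. -/
abbrev E (d : ℕ) := EuclideanSpace ℝ (Fin d)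

/-- `X n d = (ℝ^d)^n` with the ℓ2 product (Euclidean) norm. -/
abbrev X (n d : ℕ) := PiLp 2 (fun _ : Fin n => E d)

/-- The cluster `I_j` of clients assigned to cluster `j` by the assignment map `c`. -/
def clSet {n k : ℕ} (c : Fin n → Fin k) (j : Fin k) : Finset (Fin n) :=
  Finset.univ.filter fun i => c i = j

/-- The global average θ̄ = (Σ_j Σ_{i∈I_j} α_j γ_i θ_i)/(Σ_j Σ_{i∈I_j} α_j γ_i). -/
def glAvg {n k d : ℕ} (c : Fin n → Fin k) (γ : Fin n → ℝ) (α : Fin k → ℝ)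
    (θ : X n d) : E d :=
  (∑ j, ∑ i ∈ clSet c j, α j * γ i)⁻¹ • ∑ j, ∑ i ∈ clSet c j, (α j * γ i) • θ i

open scoped RealInnerProductSpace

/-- weighted average -/
def wAvg {n d : ℕ} (w : Fin n → ℝ) (θ : X n d) : E d :=
  (∑ i, w i)⁻¹ • ∑ i, w i • θ i

def qf {n d : ℕ} (w : Fin n → ℝ) (θ : X n d) : ℝ :=
  (1:ℝ)/2 * ∑ i, w i * ‖θ i - wAvg w θ‖ ^ 2

def gPhi {n d : ℕ} (w : Fin n → ℝ) (θ : X n d) : X n d :=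
  WithLp.toLp 2 (fun i => w i • (θ i - wAvg w θ))

variable {n d : ℕ} {w : Fin n → ℝ}

lemma wAvg_add (x y : X n d) : wAvg w (x + y) = wAvg w x + wAvg w y := by
  simp only [wAvg, ← smul_add, ← Finset.sum_add_distrib]
  congr 1

lemma wAvg_smul (r : ℝ) (x : X n d) : wAvg w (r • x) = r • wAvg w x := by
  simp only [wAvg]
  rw [smul_comm]
  congr 1
  rw [Finset.smul_sum]
  refine Finset.sum_congr rfl fun i _ => ?_
  have : (r • x) i = r • x i := rfl
  rw [this, smul_comm]

lemma wAvg_sub (x y : X n d) : wAvg w (x - y) = wAvg w x - wAvg w y := by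
  rw [eq_sub_iff_add_eq, ← wAvg_add, sub_add_cancel]

lemma sum_w_smul (hW : (∑ i, w i) ≠ 0) (x : X n d) :
    ∑ i, w i • (x i - wAvg w x) = (0 : E d) := by
  simp only [smul_sub, Finset.sum_sub_distrib, ← Finset.sum_smul, wAvg, smul_smul,
    ← Finset.sum_mul, mul_inv_cancel₀ hW, one_smul, sub_self]

lemma gPhi_apply (x : X n d) (i : Fin n) : gPhi w x i = w i • (x i - wAvg w x) := rfl

lemma inner_gPhi (x y : X n d) :
    ⟪gPhi w x, y⟫ = ∑ i, w i * ⟪x i - wAvg w x, y i⟫ := by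
  rw [PiLp.inner_apply]
  exact Finset.sum_congr rfl fun i _ => real_inner_smul_left _ _ _

lemma qf_expand (hW : (∑ i, w i) ≠ 0) (x y : X n d) :
    qf w (x + y) = qf w x + ⟪gPhi w x, y⟫ + qf w y := by
  have hx0 : ⟪∑ i, w i • (x i - wAvg w x), wAvg w y⟫ = 0 := by
    rw [sum_w_smul hW x, inner_zero_left]
  rw [sum_inner] at hx0
  simp only [real_inner_smul_left] at hx0
  have key : ∑ i, w i * ⟪x i - wAvg w x, y i - wAvg w y⟫ = ⟪gPhi w x, y⟫ := by
    rw [inner_gPhi]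
    have : ∀ i ∈ Finset.univ, w i * ⟪x i - wAvg w x, y i - wAvg w y⟫
        = w i * ⟪x i - wAvg w x, y i⟫ - w i * ⟪x i - wAvg w x, wAvg w y⟫ := by
      intro i _
      rw [inner_sub_right]; ring
    rw [Finset.sum_congr rfl this, Finset.sum_sub_distrib, hx0, sub_zero]
  simp only [qf]
  rw [← key]
  have hterm : ∀ i ∈ Finset.univ, w i * ‖(x + y) i - wAvg w (x + y)‖ ^ 2
      = w i * ‖x i - wAvg w x‖ ^ 2 + 2 * (w i * ⟪x i - wAvg w x, y i - wAvg w y⟫)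
        + w i * ‖y i - wAvg w y‖ ^ 2 := by
    intro i _
    have h1 : (x + y) i - wAvg w (x + y)
        = (x i - wAvg w x) + (y i - wAvg w y) := by
      rw [wAvg_add]
      show x i + y i - _ = _
      abel
    rw [h1, norm_add_sq_real]; ring
  rw [Finset.sum_congr rfl hterm]
  simp only [Finset.sum_add_distrib]
  rw [← Finset.mul_sum]
  ring

lemma qf_smul (r : ℝ) (x : X n d) : qf w (r • x) = r ^ 2 * qf w x := by
  simp only [qf]
  have hterm : ∀ i ∈ Finset.univ, w i * ‖(r • x) i - wAvg w (r • x)‖ ^ 2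
      = r ^ 2 * (w i * ‖x i - wAvg w x‖ ^ 2) := by
    intro i _
    have h1 : (r • x) i - wAvg w (r • x) = r • (x i - wAvg w x) := by
      rw [wAvg_smul]
      show r • x i - _ = _
      rw [smul_sub]
    rw [h1, norm_smul, Real.norm_eq_abs, mul_pow, sq_abs]
    ring
  rw [Finset.sum_congr rfl hterm, ← Finset.mul_sum]
  ring

lemma gPhi_sub (x y : X n d) : gPhi w (x - y) = gPhi w x - gPhi w y := by
  ext1 i
  show w i • ((x - y) i - wAvg w (x - y)) = gPhi w x i - gPhi w y i
  rw [wAvg_sub, gPhi_apply, gPhi_apply, ← smul_sub]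
  congr 1
  show x i - y i - _ = _
  abel

lemma gPhi_smul (r : ℝ) (x : X n d) : gPhi w (r • x) = r • gPhi w x := by
  ext1 i
  show w i • ((r • x) i - wAvg w (r • x)) = (r • gPhi w x) i
  rw [wAvg_smul]
  show w i • (r • x i - r • wAvg w x) = r • (w i • (x i - wAvg w x))
  rw [← smul_sub, smul_comm]

lemma qf_nonneg (hw : ∀ i, 0 ≤ w i) (x : X n d) : 0 ≤ qf w x := by
  unfold qf
  have : ∀ i ∈ Finset.univ, (0:ℝ) ≤ w i * ‖x i - wAvg w x‖ ^ 2 :=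
    fun i _ => mul_nonneg (hw i) (by positivity)
  have := Finset.sum_nonneg this
  linarith

lemma sum_sq_le (hw : ∀ i, 0 ≤ w i) (hW : (∑ i, w i) ≠ 0) (x : X n d) :
    ∑ i, w i * ‖x i - wAvg w x‖ ^ 2 ≤ ∑ i, w i * ‖x i‖ ^ 2 := by
  have hsum : ∑ i, w i • x i = (∑ i, w i) • wAvg w x := by
    rw [wAvg, smul_smul, mul_inv_cancel₀ hW, one_smul]
  have hip : ⟪∑ i, w i • x i, wAvg w x⟫ = (∑ i, w i) * ‖wAvg w x‖ ^ 2 := by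
    rw [hsum, real_inner_smul_left, real_inner_self_eq_norm_sq]
  rw [sum_inner] at hip
  simp only [real_inner_smul_left] at hip
  have hterm : ∀ i ∈ Finset.univ, w i * ‖x i - wAvg w x‖ ^ 2
      = w i * ‖x i‖ ^ 2 - 2 * (w i * ⟪x i, wAvg w x⟫) + w i * ‖wAvg w x‖ ^ 2 := by
    intro i _
    rw [norm_sub_sq_real]; ring
  rw [Finset.sum_congr rfl hterm]
  simp only [Finset.sum_add_distrib, Finset.sum_sub_distrib]
  rw [← Finset.mul_sum, hip, ← Finset.sum_mul]
  have h1 : (0:ℝ) ≤ (∑ i, w i) * ‖wAvg w x‖ ^ 2 :=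
    mul_nonneg (Finset.sum_nonneg fun i _ => hw i) (by positivity)
  nlinarith

lemma qf_le {L : ℝ} (hw : ∀ i, 0 ≤ w i) (hW : (∑ i, w i) ≠ 0)
    (hL : ∀ i, w i ≤ L) (x : X n d) : qf w x ≤ L / 2 * ‖x‖ ^ 2 := by
  have h1 := sum_sq_le hw hW x
  have h2 : ∑ i, w i * ‖x i‖ ^ 2 ≤ ∑ i, L * ‖x i‖ ^ 2 :=
    Finset.sum_le_sum fun i _ => mul_le_mul_of_nonneg_right (hL i) (by positivity)
  rw [← Finset.mul_sum] at h2
  have h3 : ‖x‖ ^ 2 = ∑ i, ‖x i‖ ^ 2 := PiLp.norm_sq_eq_of_L2 _ x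
  unfold qf
  rw [h3]
  linarith

lemma gPhi_norm_le {L : ℝ} (hw : ∀ i, 0 ≤ w i) (hW : (∑ i, w i) ≠ 0)
    (hL : ∀ i, w i ≤ L) (hL0 : 0 ≤ L) (x : X n d) : ‖gPhi w x‖ ≤ L * ‖x‖ := by
  have hsq : ‖gPhi w x‖ ^ 2 ≤ (L * ‖x‖) ^ 2 := by
    rw [PiLp.norm_sq_eq_of_L2]
    have h1 : ∀ i ∈ Finset.univ, ‖gPhi w x i‖ ^ 2 ≤ L * (w i * ‖x i - wAvg w x‖ ^ 2) := by
      intro i _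
      rw [gPhi_apply, norm_smul, Real.norm_eq_abs, mul_pow, sq_abs]
      have hww : w i * w i ≤ L * w i := mul_le_mul_of_nonneg_right (hL i) (hw i)
      nlinarith [sq_nonneg ‖x i - wAvg w x‖, hw i, hL i, hww]
    have h2 := Finset.sum_le_sum h1
    rw [← Finset.mul_sum] at h2
    have h3 := sum_sq_le hw hW x
    have h4 : ∑ i, w i * ‖x i‖ ^ 2 ≤ ∑ i, L * ‖x i‖ ^ 2 :=
      Finset.sum_le_sum fun i _ => mul_le_mul_of_nonneg_right (hL i) (by positivity)
    rw [← Finset.mul_sum] at h4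
    have h5 : ‖x‖ ^ 2 = ∑ i, ‖x i‖ ^ 2 := PiLp.norm_sq_eq_of_L2 _ x
    have hsums : (0:ℝ) ≤ ∑ i, ‖x i‖ ^ 2 :=
      Finset.sum_nonneg fun i _ => by positivity
    calc ∑ i, ‖gPhi w x i‖ ^ 2 ≤ L * ∑ i, w i * ‖x i - wAvg w x‖ ^ 2 := h2
      _ ≤ L * (L * ∑ i, ‖x i‖ ^ 2) := by nlinarith
      _ = (L * ‖x‖) ^ 2 := by rw [mul_pow, h5]; ring
  exact (pow_le_pow_iff_left₀ (norm_nonneg _) (by positivity) two_ne_zero).mp hsq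

lemma hasGradientAt_qf {L : ℝ} (hw : ∀ i, 0 ≤ w i) (hW : (∑ i, w i) ≠ 0)
    (hL : ∀ i, w i ≤ L) (x : X n d) : HasGradientAt (qf w) (gPhi w x) x := by
  rw [hasGradientAt_iff_isLittleO_nhds_zero]
  have heq : (fun h : X n d => qf w (x + h) - qf w x - ⟪gPhi w x, h⟫)
      = fun h => qf w h := by
    funext h
    rw [qf_expand hW x h]
    ring
  rw [heq]
  have hbig : (fun h : X n d => qf w h) =O[nhds 0] fun h => ‖h‖ ^ 2 := by
    refine Asymptotics.IsBigO.of_bound (L / 2) (Filter.Eventually.of_forall fun h => ?_)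
    rw [Real.norm_eq_abs, Real.norm_eq_abs, abs_of_nonneg (qf_nonneg hw h),
      abs_of_nonneg (by positivity : (0:ℝ) ≤ ‖h‖ ^ 2)]
    exact qf_le hw hW hL h
  exact hbig.trans_isLittleO (Asymptotics.isLittleO_norm_pow_id (by norm_num))

lemma gradient_qf {L : ℝ} (hw : ∀ i, 0 ≤ w i) (hW : (∑ i, w i) ≠ 0)
    (hL : ∀ i, w i ≤ L) (x : X n d) : gradient (qf w) x = gPhi w x :=
  (hasGradientAt_qf hw hW hL x).gradient

lemma convexOn_qf (hw : ∀ i, 0 ≤ w i) (hW : (∑ i, w i) ≠ 0) :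
    ConvexOn ℝ Set.univ (qf w (d := d)) := by
  refine ⟨convex_univ, fun x _ y _ a b ha hb hab => ?_⟩
  have e1 : qf w (a • x + b • y) = a ^ 2 * qf w x + a * b * ⟪gPhi w x, y⟫ + b ^ 2 * qf w y := by
    rw [qf_expand hW, qf_smul, qf_smul, gPhi_smul, real_inner_smul_left,
      real_inner_smul_right]
    ring
  have e2 : qf w (x - y) = qf w x - ⟪gPhi w x, y⟫ + qf w y := by
    have hxy : x - y = x + (-1 : ℝ) • y := by module
    rw [hxy, qf_expand hW, qf_smul, real_inner_smul_right]
    ring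
  have h3 : 0 ≤ qf w (x - y) := qf_nonneg hw _
  have h4 : 0 ≤ a * b := mul_nonneg ha hb
  simp only [smul_eq_mul]
  have hb' : b = 1 - a := by linarith
  have key : a * qf w x + b * qf w y - qf w (a • x + b • y) = a * b * qf w (x - y) := by
    rw [e1, e2, hb']
    ring
  nlinarith [mul_nonneg h4 h3, key]

/-- the global regularizer φ(θ) = (1/2) Σ_j α_j Σ_{i∈I_j} γ_i ‖θ_i − θ̄‖²
is convex as a function of θ ∈ (ℝ^d)^n and its gradient is Lipschitz with constant
max_j max_{i∈I_j} α_j γ_i. -/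
theorem phi_convex_smooth {n k d : ℕ} (hk : 0 < k)
    (c : Fin n → Fin k) (hc : ∀ j, (clSet c j).Nonempty)
    (γ : Fin n → ℝ) (hγ : ∀ i, 0 < γ i)
    (α : Fin k → ℝ) (hα : ∀ j, α j ∈ Set.Ioc (0 : ℝ) 1)
    (φ : X n d → ℝ)
    (hφ : ∀ θ, φ θ = 1/2 * ∑ j, α j * ∑ i ∈ clSet c j, γ i * ‖θ i - glAvg c γ α θ‖ ^ 2) :
    ConvexOn ℝ Set.univ φ ∧
    ∀ θ θ' : X n d, ‖gradient φ θ - gradient φ θ'‖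
      ≤ (Finset.univ.sup' (Finset.univ_nonempty_iff.mpr ⟨⟨0, hk⟩⟩)
          fun j => (clSet c j).sup' (hc j) fun i => α j * γ i) * ‖θ - θ'‖ := by
  obtain ⟨i0, hi0⟩ := hc ⟨0, hk⟩
  haveI : Nonempty (Fin n) := ⟨i0⟩
  set w : Fin n → ℝ := fun i => α (c i) * γ i with hw_def
  have hw : ∀ i, 0 < w i := fun i => mul_pos (hα (c i)).1 (hγ i)
  have hw' : ∀ i, 0 ≤ w i := fun i => (hw i).le
  have hWpos : 0 < ∑ i, w i := Finset.sum_pos (fun i _ => hw i) Finset.univ_nonempty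
  have hW : (∑ i, w i) ≠ 0 := ne_of_gt hWpos
  have hmem : ∀ i, i ∈ clSet c (c i) := by
    intro i; simp [clSet]
  have hci : ∀ j, ∀ i ∈ clSet c j, c i = j := by
    intro j i hi
    exact (Finset.mem_filter.mp hi).2
  have hsum1 : (∑ j, ∑ i ∈ clSet c j, α j * γ i) = ∑ i, w i := by
    rw [← Finset.sum_fiberwise Finset.univ c w]
    refine Finset.sum_congr rfl fun j _ => Finset.sum_congr rfl fun i hi => ?_
    simp only [hw_def, hci j i hi]
  have hsum2 : ∀ θ : X n d, (∑ j, ∑ i ∈ clSet c j, (α j * γ i) • θ i)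
      = ∑ i, w i • θ i := by
    intro θ
    rw [← Finset.sum_fiberwise Finset.univ c fun i => w i • θ i]
    refine Finset.sum_congr rfl fun j _ => Finset.sum_congr rfl fun i hi => ?_
    simp only [hw_def, hci j i hi]
  have hAvg : ∀ θ : X n d, glAvg c γ α θ = wAvg w θ := by
    intro θ
    rw [glAvg, wAvg, hsum1, hsum2]
  have hphi : φ = qf w := by
    funext θ
    rw [hφ θ, qf]
    congr 1
    rw [← Finset.sum_fiberwise Finset.univ c fun i => w i * ‖θ i - wAvg w θ‖ ^ 2]
    refine Finset.sum_congr rfl fun j _ => ?_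
    rw [Finset.mul_sum]
    refine Finset.sum_congr rfl fun i hi => ?_
    simp only [hw_def, hci j i hi, hAvg θ]
    ring
  set L : ℝ := Finset.univ.sup' (Finset.univ_nonempty_iff.mpr ⟨⟨0, hk⟩⟩)
      (fun j => (clSet c j).sup' (hc j) fun i => α j * γ i) with hL_def
  have hL : ∀ i, w i ≤ L := by
    intro i
    have h1 : w i ≤ (clSet c (c i)).sup' (hc (c i)) fun i' => α (c i) * γ i' :=
      Finset.le_sup' (fun i' => α (c i) * γ i') (hmem i)
    have h2 : ((clSet c (c i)).sup' (hc (c i)) fun i' => α (c i) * γ i') ≤ L :=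
      Finset.le_sup' (fun j => (clSet c j).sup' (hc j) fun i' => α j * γ i')
        (Finset.mem_univ (c i))
    exact h1.trans h2
  have hL0 : 0 ≤ L := (hw i0).le.trans (hL i0)
  constructor
  · rw [hphi]
    exact convexOn_qf hw' hW
  · intro θ θ'
    rw [hphi, gradient_qf hw' hW hL θ, gradient_qf hw' hW hL θ', ← gPhi_sub]
    exact gPhi_norm_le hw' hW hL hL0 _
end
end

section
/- Suppose τ_j = p_0/(p_0 + 2(1−p_0)p_j) for each j = 1,…,k. Then for all θ, θ̂ ∈ (ℝ^d)^n, the expectation over (ξ_0, ξ_1, …, ξ_k) of ‖G(θ) − G(θ̂)‖² satisfies E‖G(θ) − G(θ̂)‖² ≤ (2/p_0)‖∇φ(θ) − ∇φ(θ̂)‖² + Σ_{j=1}^k [2(1−α_j)²/(p_0 + 2(1−p_0)p_j)] ‖∇ψ_j(θ) − ∇ψ_j(θ̂)‖² + (1/(1−p_0)) Σ_{j=1}^k (1/(1−p_j)) ‖∇F_j(θ) − ∇F_j(θ̂)‖², where ∇ψ_j and ∇F_j denote the gradients with respect to the block of coordinates (θ_i)_{i∈I_j}. -/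
open scoped BigOperators

noncomputable section

/-- The weighted cluster average θ̄_j = (Σ_{i∈I_j} γ_i θ_i)/(Σ_{i∈I_j} γ_i). -/
def clAvg {n k d : ℕ} (c : Fin n → Fin k) (γ : Fin n → ℝ) (j : Fin k)
    (θ : X n d) : E d :=
  (∑ i ∈ clSet c j, γ i)⁻¹ • ∑ i ∈ clSet c j, γ i • θ i

/-- The within-cluster regularizer ψ_j(θ) = (1/2) Σ_{i∈I_j} γ_i ‖θ_i − θ̄_j‖². -/
def psi {n k d : ℕ} (c : Fin n → Fin k) (γ : Fin n → ℝ) (j : Fin k) (θ : X n d) : ℝ :=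
  1/2 * ∑ i ∈ clSet c j, γ i * ‖θ i - clAvg c γ j θ‖ ^ 2

/-- The global regularizer φ(θ) = (1/2) Σ_j α_j Σ_{i∈I_j} γ_i ‖θ_i − θ̄‖². -/
def phi {n k d : ℕ} (c : Fin n → Fin k) (γ : Fin n → ℝ) (α : Fin k → ℝ)
    (θ : X n d) : ℝ :=
  1/2 * ∑ j, α j * ∑ i ∈ clSet c j, γ i * ‖θ i - glAvg c γ α θ‖ ^ 2

/-- The cluster loss F_j(θ) = Σ_{i∈I_j} f_i(θ_i). -/
def clLoss {n k d : ℕ} (c : Fin n → Fin k) (f : Fin n → E d → ℝ) (j : Fin k)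
    (θ : X n d) : ℝ :=
  ∑ i ∈ clSet c j, f i (θ i)

/-- An outcome of the Async-L2GD randomness: the Bernoulli draws (ξ_0, ξ_1, …, ξ_k). -/
abbrev Outcome (k : ℕ) := Bool × (Fin k → Bool)

/-- The probability of an outcome (ξ_0, ξ_1, …, ξ_k) of independent Bernoulli draws
with parameters (p_0, p_1, …, p_k). -/
def wt {k : ℕ} (p0 : ℝ) (p : Fin k → ℝ) (ω : Outcome k) : ℝ :=
  (if ω.1 then p0 else 1 - p0) * ∏ j, (if ω.2 j then p j else 1 - p j)

/-- The Async-L2GD stochastic gradient oracle G(θ) for the outcome ω = (ξ_0, ξ). -/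
def Orc {n k d : ℕ} (c : Fin n → Fin k) (γ : Fin n → ℝ) (α : Fin k → ℝ)
    (τ : Fin k → ℝ) (p0 : ℝ) (p : Fin k → ℝ) (f : Fin n → E d → ℝ)
    (θ : X n d) (ω : Outcome k) : X n d :=
  WithLp.toLp 2 fun i =>
    if ω.1 then
      (γ i * α (c i) / p0) • (θ i - glAvg c γ α θ)
        + (γ i * τ (c i) * (1 - α (c i)) / p0) • (θ i - clAvg c γ (c i) θ)
    else if ω.2 (c i) then
      (γ i * (1 - τ (c i)) * (1 - α (c i)) / ((1 - p0) * p (c i)))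
        • (θ i - clAvg c γ (c i) θ)
    else
      (1 / ((1 - p0) * (1 - p (c i)))) • gradient (f i) (θ i)

namespace OVB

lemma sq_add_le {Y : Type*} [SeminormedAddCommGroup Y] (x y : Y) :
    ‖x + y‖ ^ 2 ≤ 2 * ‖x‖ ^ 2 + 2 * ‖y‖ ^ 2 := by
  nlinarith [norm_add_le x y, norm_nonneg (x+y), sq_nonneg (‖x‖ - ‖y‖)]

lemma smul_sq {Y : Type*} [SeminormedAddCommGroup Y] [NormedSpace ℝ Y] (r : ℝ) (v : Y) :
    ‖r • v‖ ^ 2 = r ^ 2 * ‖v‖ ^ 2 := by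
  rw [norm_smul, mul_pow, Real.norm_eq_abs, sq_abs]

section Q
variable {Y : Type*} [NormedAddCommGroup Y] [InnerProductSpace ℝ Y] [CompleteSpace Y]

lemma hasGradientAt_quadratic (φ : Y → ℝ) (g : Y → Y) (C : ℝ)
    (key : ∀ θ h : Y, φ (θ + h) = φ θ + inner ℝ (g θ) h + φ h)
    (hbound : ∀ h : Y, |φ h| ≤ C * ‖h‖ ^ 2) (θ : Y) :
    HasGradientAt φ (g θ) θ := by
  rw [hasGradientAt_iff_hasFDerivAt, hasFDerivAt_iff_isLittleO_nhds_zero]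
  have hval : ∀ h : Y, φ (θ + h) - φ θ - (InnerProductSpace.toDual ℝ Y (g θ)) h = φ h := by
    intro h
    rw [InnerProductSpace.toDual_apply_apply, key θ h]; ring
  simp only [hval]
  rw [Asymptotics.isLittleO_iff]
  intro c hc
  rw [Metric.eventually_nhds_iff]
  refine ⟨c / (|C| + 1), by positivity, fun {h} hh => ?_⟩
  rw [dist_zero_right] at hh
  have h1 := hbound h
  have h2 : ‖h‖ * (|C| + 1) ≤ c := by
    rw [← le_div_iff₀ (by positivity)]
    exact le_of_lt hh
  have h3 : C ≤ |C| := le_abs_self C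
  have h4 : (0:ℝ) ≤ ‖h‖ := norm_nonneg h
  have h5 : |φ h| ≤ |C| * ‖h‖ ^ 2 := by nlinarith
  rw [Real.norm_eq_abs]
  nlinarith

end Q

variable {n k d : ℕ}

lemma norm_sq_X (h : X n d) : ‖h‖ ^ 2 = ∑ i, ‖h i‖ ^ 2 :=
  PiLp.norm_sq_eq_of_L2 _ h

lemma norm_coord_le (h : X n d) (i : Fin n) : ‖h i‖ ≤ ‖h‖ := by
  have h1 : ‖h i‖ ^ 2 ≤ ‖h‖ ^ 2 := by
    rw [norm_sq_X]
    exact Finset.single_le_sum (f := fun i => ‖h i‖ ^ 2)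
      (fun i _ => by positivity) (Finset.mem_univ i)
  nlinarith [norm_nonneg (h i), norm_nonneg h]

def wAvg (w : Fin n → ℝ) (θ : X n d) : E d := (∑ i, w i)⁻¹ • ∑ i, w i • θ i
def wPhi (w : Fin n → ℝ) (θ : X n d) : ℝ := 1/2 * ∑ i, w i * ‖θ i - wAvg w θ‖ ^ 2
def wGrad (w : Fin n → ℝ) (θ : X n d) : X n d := WithLp.toLp 2 fun i => w i • (θ i - wAvg w θ)

lemma wAvg_add (w : Fin n → ℝ) (θ h : X n d) :
    wAvg w (θ + h) = wAvg w θ + wAvg w h := by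
  simp only [wAvg, PiLp.add_apply, smul_add, Finset.sum_add_distrib]

lemma worth (w : Fin n → ℝ) (hw : (∑ i, w i) ≠ 0) (θ : X n d) :
    ∑ i, w i • (θ i - wAvg w θ) = (0 : E d) := by
  have h1 : ∑ i, w i • wAvg w θ = (∑ i, w i) • wAvg w θ := Finset.sum_smul.symm
  have h2 : (∑ i, w i • (θ i - wAvg w θ)) = ∑ i, w i • θ i - ∑ i, w i • wAvg w θ := by
    rw [← Finset.sum_sub_distrib]
    exact Finset.sum_congr rfl fun i _ => smul_sub _ _ _
  rw [h2, h1, wAvg, smul_smul, mul_inv_cancel₀ hw, one_smul, sub_self]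

lemma wPhi_key (w : Fin n → ℝ) (hw : (∑ i, w i) ≠ 0) (θ h : X n d) :
    wPhi w (θ + h) = wPhi w θ + inner ℝ (wGrad w θ) h + wPhi w h := by
  have expand : ∀ i : Fin n, ‖(θ + h) i - wAvg w (θ + h)‖ ^ 2
      = ‖θ i - wAvg w θ‖ ^ 2 + 2 * inner ℝ (θ i - wAvg w θ) (h i)
        - 2 * inner ℝ (θ i - wAvg w θ) (wAvg w h) + ‖h i - wAvg w h‖ ^ 2 := by
    intro i
    rw [wAvg_add, PiLp.add_apply]
    have e : θ i + h i - (wAvg w θ + wAvg w h)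
        = (θ i - wAvg w θ) + (h i - wAvg w h) := by abel
    rw [e, norm_add_sq_real, inner_sub_right]
    ring
  have hcross : ∑ i, w i * (inner ℝ (θ i - wAvg w θ) (wAvg w h) : ℝ) = 0 := by
    have e : ∀ i ∈ Finset.univ, w i * (inner ℝ (θ i - wAvg w θ) (wAvg w h) : ℝ)
        = inner ℝ (w i • (θ i - wAvg w θ)) (wAvg w h) :=
      fun i _ => (real_inner_smul_left _ _ _).symm
    rw [Finset.sum_congr rfl e, ← sum_inner, worth w hw θ, inner_zero_left]
  have hinner : (inner ℝ (wGrad w θ) h : ℝ) = ∑ i, w i * inner ℝ (θ i - wAvg w θ) (h i) := by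
    rw [PiLp.inner_apply]
    exact Finset.sum_congr rfl fun i _ => real_inner_smul_left _ _ _
  simp only [wPhi, expand]
  rw [hinner]
  have split : ∑ i, w i * (‖θ i - wAvg w θ‖ ^ 2 + 2 * inner ℝ (θ i - wAvg w θ) (h i)
        - 2 * inner ℝ (θ i - wAvg w θ) (wAvg w h) + ‖h i - wAvg w h‖ ^ 2)
      = ∑ i, w i * ‖θ i - wAvg w θ‖ ^ 2
        + 2 * ∑ i, w i * (inner ℝ (θ i - wAvg w θ) (h i) : ℝ)
        - 2 * ∑ i, w i * (inner ℝ (θ i - wAvg w θ) (wAvg w h) : ℝ)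
        + ∑ i, w i * ‖h i - wAvg w h‖ ^ 2 := by
    simp only [Finset.mul_sum]
    rw [← Finset.sum_add_distrib, ← Finset.sum_sub_distrib, ← Finset.sum_add_distrib]
    exact Finset.sum_congr rfl fun i _ => by ring
  rw [split, hcross]
  ring

lemma wPhi_bound (w : Fin n → ℝ) (hw0 : ∀ i, 0 ≤ w i) :
    ∃ C, ∀ h : X n d, |wPhi w h| ≤ C * ‖h‖ ^ 2 := by
  set W := ∑ i, w i with hW
  set K := 1 + |W⁻¹| * W with hK
  refine ⟨W * K ^ 2 / 2, fun h => ?_⟩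
  have hWnn : 0 ≤ W := Finset.sum_nonneg fun i _ => hw0 i
  have hm : ‖wAvg w h‖ ≤ |W⁻¹| * (W * ‖h‖) := by
    have h1 : ‖∑ i, w i • h i‖ ≤ ∑ i, w i * ‖h‖ := by
      refine (norm_sum_le _ _).trans (Finset.sum_le_sum fun i _ => ?_)
      rw [norm_smul, Real.norm_eq_abs, abs_of_nonneg (hw0 i)]
      exact mul_le_mul_of_nonneg_left (norm_coord_le h i) (hw0 i)
    have h2 : ∑ i, w i * ‖h‖ = W * ‖h‖ := (Finset.sum_mul _ _ _).symm
    calc ‖wAvg w h‖ = |W⁻¹| * ‖∑ i, w i • h i‖ := by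
          rw [wAvg, norm_smul, Real.norm_eq_abs]
    _ ≤ |W⁻¹| * (W * ‖h‖) := by
          rw [← h2]; exact mul_le_mul_of_nonneg_left h1 (abs_nonneg _)
  have hterm : ∀ i, w i * ‖h i - wAvg w h‖ ^ 2 ≤ w i * ((K * ‖h‖) ^ 2) := by
    intro i
    have hle : ‖h i - wAvg w h‖ ≤ K * ‖h‖ := by
      calc ‖h i - wAvg w h‖ ≤ ‖h i‖ + ‖wAvg w h‖ := norm_sub_le _ _
      _ ≤ ‖h‖ + |W⁻¹| * (W * ‖h‖) := add_le_add (norm_coord_le h i) hm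
      _ = K * ‖h‖ := by rw [hK]; ring
    have h3 := norm_nonneg (h i - wAvg w h)
    have h2 : ‖h i - wAvg w h‖ ^ 2 ≤ (K * ‖h‖) ^ 2 := by nlinarith
    exact mul_le_mul_of_nonneg_left h2 (hw0 i)
  have habs : |wPhi w h| = wPhi w h := abs_of_nonneg (by
    unfold wPhi
    have : (0:ℝ) ≤ ∑ i, w i * ‖h i - wAvg w h‖ ^ 2 :=
      Finset.sum_nonneg fun i _ => mul_nonneg (hw0 i) (sq_nonneg _)
    linarith)
  rw [habs]
  unfold wPhi
  calc 1/2 * ∑ i, w i * ‖h i - wAvg w h‖ ^ 2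
      ≤ 1/2 * ∑ i, w i * ((K * ‖h‖) ^ 2) := by
        have := Finset.sum_le_sum fun i (_ : i ∈ Finset.univ) => hterm i
        linarith
  _ = W * K ^ 2 / 2 * ‖h‖ ^ 2 := by rw [← Finset.sum_mul _ _ _]; ring

lemma hasGradientAt_wPhi (w : Fin n → ℝ) (hw0 : ∀ i, 0 ≤ w i) (hw : (∑ i, w i) ≠ 0)
    (θ : X n d) : HasGradientAt (wPhi w) (wGrad w θ) θ := by
  obtain ⟨C, hC⟩ := wPhi_bound (d := d) w hw0
  exact hasGradientAt_quadratic (wPhi w) (wGrad w) C (wPhi_key w hw) hC θ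

/-- coordinate embedding -/
def sing (i : Fin n) (v : E d) : X n d := WithLp.toLp 2 fun i' => if i' = i then v else 0

lemma hasGradientAt_comp_eval (i : Fin n) (f : E d → ℝ) (θ : X n d)
    (hf : DifferentiableAt ℝ f (θ i)) :
    HasGradientAt (fun θ' : X n d => f (θ' i)) (sing i (gradient f (θ i))) θ := by
  have h1 : HasFDerivAt f
      ((InnerProductSpace.toDual ℝ (E d)) (gradient f (θ i))) (θ i) :=
    hf.hasGradientAt.hasFDerivAt
  have h2 := (PiLp.proj (𝕜 := ℝ) 2 (fun _ : Fin n => E d) i).hasFDerivAt (x := θ)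
  have h3 := h1.comp θ h2
  rw [hasGradientAt_iff_hasFDerivAt]
  have heq : (InnerProductSpace.toDual ℝ (X n d)) (sing i (gradient f (θ i)))
      = ((InnerProductSpace.toDual ℝ (E d)) (gradient f (θ i))).comp
          (PiLp.proj (𝕜 := ℝ) 2 (fun _ : Fin n => E d) i) := by
    apply ContinuousLinearMap.ext
    intro h
    simp only [InnerProductSpace.toDual_apply_apply, ContinuousLinearMap.comp_apply,
      InnerProductSpace.toDual_apply_apply]
    rw [PiLp.inner_apply]
    rw [Finset.sum_eq_single_of_mem i (Finset.mem_univ i)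
      (fun b _ hb => by
        have : sing i (gradient f (θ i)) b = 0 := if_neg hb
        rw [this, inner_zero_left])]
    · have : sing i (gradient f (θ i)) i = gradient f (θ i) := if_pos rfl
      rw [this]; rfl
  rw [heq]
  exact h3

lemma sum_single_eq {s : Finset (Fin n)} (v : Fin n → E d) :
    (∑ i ∈ s, sing i (v i))
      = (WithLp.toLp 2 (fun i' => if i' ∈ s then v i' else 0) : X n d) := by
  ext i' : 1
  have happ : (∑ i ∈ s, sing i (v i)) i'
      = ∑ i ∈ s, sing i (v i) i' := by rw [WithLp.ofLp_sum, Finset.sum_apply]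
  rw [happ]
  have he : ∀ i, sing i (v i) i' = if i' = i then v i else 0 := fun i => rfl
  simp only [he]
  exact Finset.sum_ite_eq s i' v

lemma hasGradientAt_clLoss (c : Fin n → Fin k) (f : Fin n → E d → ℝ)
    (hf : ∀ i, Differentiable ℝ (f i)) (j : Fin k) (θ : X n d) :
    HasGradientAt (clLoss c f j)
      (WithLp.toLp 2 (fun i => if i ∈ clSet c j then gradient (f i) (θ i) else 0) : X n d) θ := by
  rw [hasGradientAt_iff_hasFDerivAt, ← sum_single_eq, map_sum]
  exact HasFDerivAt.fun_sum fun i _ =>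
    (hasGradientAt_comp_eval i (f i) θ ((hf i).differentiableAt)).hasFDerivAt

lemma marg (w : Fin k → Bool → ℝ) (hw : ∀ j, w j true + w j false = 1) (j0 : Fin k)
    (v : Bool → ℝ) :
    ∑ g : Fin k → Bool, (∏ j, w j (g j)) * v (g j0)
      = w j0 true * v true + w j0 false * v false := by
  have key : ∀ g : Fin k → Bool, (∏ j, w j (g j)) * v (g j0)
      = ∏ j, (w j (g j) * (if j = j0 then v (g j) else 1)) := by
    intro g
    rw [Finset.prod_mul_distrib, Fintype.prod_ite_eq' j0 (fun j => v (g j))]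
  rw [Finset.sum_congr rfl (fun g _ => key g),
    show (∑ g : Fin k → Bool, ∏ j, (w j (g j) * if j = j0 then v (g j) else 1))
      = ∏ j, ∑ b, (w j b * if j = j0 then v b else 1) from
      (Fintype.prod_sum (f := fun (j : Fin k) (b : Bool) =>
        w j b * if j = j0 then v b else 1)).symm]
  rw [Finset.prod_eq_single j0
    (fun j _ hj => by
      rw [Fintype.sum_bool]
      simp only [if_neg hj, mul_one]
      simpa using hw j)
    (fun hj => absurd (Finset.mem_univ j0) hj)]
  rw [Fintype.sum_bool]
  simp

lemma sum_wt_eval (p0 : ℝ) (p : Fin k → ℝ) (j0 : Fin k) (u : Bool → Bool → ℝ) :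
    ∑ ω : Outcome k, wt p0 p ω * u ω.1 (ω.2 j0)
      = p0 * (p j0 * u true true + (1 - p j0) * u true false)
        + (1 - p0) * (p j0 * u false true + (1 - p j0) * u false false) := by
  rw [Fintype.sum_prod_type]
  rw [Fintype.sum_bool]
  have h : ∀ b0 : Bool, ∑ g : Fin k → Bool, wt p0 p (b0, g) * u b0 (g j0)
      = (if b0 then p0 else 1 - p0) * (p j0 * u b0 true + (1 - p j0) * u b0 false) := by
    intro b0
    have e : ∀ g : Fin k → Bool, wt p0 p (b0, g) * u b0 (g j0)
        = (if b0 then p0 else 1 - p0) *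
            ((∏ j, (fun j b => if b then p j else 1 - p j) j (g j)) * u b0 (g j0)) := by
      intro g
      simp only [wt]
      ring
    rw [Finset.sum_congr rfl (fun g _ => e g), ← Finset.mul_sum,
      marg (fun j b => if b then p j else 1 - p j)
        (fun j => by simp) j0 (u b0)]
    simp
  rw [h true, h false]
  simp

lemma mem_clSet {c : Fin n → Fin k} {j : Fin k} {i : Fin n} :
    i ∈ clSet c j ↔ c i = j := by
  simp [clSet]

lemma fiber_sum {M : Type*} [AddCommMonoid M] (c : Fin n → Fin k) (F : Fin n → Fin k → M) :
    ∑ j, ∑ i ∈ clSet c j, F i j = ∑ i, F i (c i) := by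
  rw [← Finset.sum_fiberwise Finset.univ c (fun i => F i (c i))]
  exact Finset.sum_congr rfl fun j _ => Finset.sum_congr rfl fun i hi => by
    rw [(Finset.mem_filter.mp hi).2]

lemma glAvg_eq (c : Fin n → Fin k) (γ : Fin n → ℝ) (α : Fin k → ℝ) (θ : X n d) :
    glAvg c γ α θ = wAvg (fun i => α (c i) * γ i) θ := by
  unfold glAvg wAvg
  rw [fiber_sum c (fun i j => α j * γ i), fiber_sum c (fun i j => (α j * γ i) • θ i)]

lemma phi_eq (c : Fin n → Fin k) (γ : Fin n → ℝ) (α : Fin k → ℝ) :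
    phi (d := d) c γ α = wPhi (fun i => α (c i) * γ i) := by
  funext θ
  unfold phi wPhi
  have h1 : ∀ j ∈ Finset.univ, α j * ∑ i ∈ clSet c j, γ i * ‖θ i - glAvg c γ α θ‖ ^ 2
      = ∑ i ∈ clSet c j, (α j * γ i) * ‖θ i - wAvg (fun i => α (c i) * γ i) θ‖ ^ 2 := by
    intro j _
    rw [Finset.mul_sum, glAvg_eq]
    exact Finset.sum_congr rfl fun i _ => by ring
  rw [Finset.sum_congr rfl h1,
    fiber_sum c (fun i j => (α j * γ i) * ‖θ i - wAvg (fun i => α (c i) * γ i) θ‖ ^ 2)]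

lemma clAvg_eq (c : Fin n → Fin k) (γ : Fin n → ℝ) (j : Fin k) (θ : X n d) :
    clAvg c γ j θ = wAvg (fun i => if c i = j then γ i else 0) θ := by
  have e : clSet c j = Finset.univ.filter (fun i => c i = j) := rfl
  have h1 : (∑ i ∈ clSet c j, γ i) = ∑ i, (if c i = j then γ i else 0) := by
    rw [e, Finset.sum_filter]
  have h2 : (∑ i ∈ clSet c j, γ i • θ i) = ∑ i, (if c i = j then γ i else 0) • θ i := by
    rw [e, Finset.sum_filter]
    exact Finset.sum_congr rfl fun i _ => by by_cases h : c i = j <;> simp [h]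
  rw [clAvg, h1, h2, wAvg]

lemma psi_eq (c : Fin n → Fin k) (γ : Fin n → ℝ) (j : Fin k) :
    psi (d := d) c γ j = wPhi (fun i => if c i = j then γ i else 0) := by
  funext θ
  unfold psi wPhi
  congr 1
  have e : clSet c j = Finset.univ.filter (fun i => c i = j) := rfl
  rw [clAvg_eq, e, Finset.sum_filter]
  exact Finset.sum_congr rfl fun i _ => by by_cases h : c i = j <;> simp [h]

end OVB

set_option maxHeartbeats 2000000 in
/-- with the optimal mixing fractions τ_j = p_0/(p_0 + 2(1−p_0)p_j), the
expected squared distance between oracle evaluations is bounded by the stated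
combination of squared gradient differences of φ, ψ_j and F_j. -/
theorem oracle_variance_bound {n k d : ℕ}
    (c : Fin n → Fin k) (hc : ∀ j, (clSet c j).Nonempty)
    (γ : Fin n → ℝ) (hγ : ∀ i, 0 < γ i)
    (α : Fin k → ℝ) (hα : ∀ j, α j ∈ Set.Ioc (0 : ℝ) 1)
    (f : Fin n → E d → ℝ) (hf : ∀ i, Differentiable ℝ (f i))
    (p0 : ℝ) (hp0 : p0 ∈ Set.Ioo (0 : ℝ) 1)
    (p : Fin k → ℝ) (hp : ∀ j, p j ∈ Set.Ioo (0 : ℝ) 1)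
    (τ : Fin k → ℝ) (hτ : ∀ j, τ j = p0 / (p0 + 2 * (1 - p0) * p j)) :
    ∀ θ θhat : X n d,
      ∑ ω : Outcome k, wt p0 p ω *
          ‖Orc c γ α τ p0 p f θ ω - Orc c γ α τ p0 p f θhat ω‖ ^ 2
        ≤ (2 / p0) * ‖gradient (phi c γ α) θ - gradient (phi c γ α) θhat‖ ^ 2
          + ∑ j, (2 * (1 - α j) ^ 2 / (p0 + 2 * (1 - p0) * p j)) *
              ‖gradient (psi c γ j) θ - gradient (psi c γ j) θhat‖ ^ 2
          + (1 / (1 - p0)) * ∑ j, (1 / (1 - p j)) *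
              ‖gradient (clLoss c f j) θ - gradient (clLoss c f j) θhat‖ ^ 2 := by
  intro θ θhat
  rcases Nat.eq_zero_or_pos n with hn | hn
  · subst hn
    have hz : ∀ u : X 0 d, ‖u‖ ^ 2 = 0 := fun u => by
      rw [OVB.norm_sq_X, show (Finset.univ : Finset (Fin 0)) = ∅ from rfl, Finset.sum_empty]
    simp only [hz, mul_zero, Finset.sum_const_zero, add_zero, zero_add]
    exact le_rfl
  have hp00 := hp0.1
  have hp01 := hp0.2
  have h1p0 : (0:ℝ) < 1 - p0 := by linarith
  have hq : ∀ j, 0 < p0 + 2 * (1 - p0) * p j := fun j => by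
    have h1 := (hp j).1; have h2 := (hp j).2; nlinarith
  have hw0 : ∀ i, (0:ℝ) ≤ α (c i) * γ i :=
    fun i => le_of_lt (mul_pos (hα (c i)).1 (hγ i))
  have hwsum : (∑ i, α (c i) * γ i) ≠ 0 :=
    ne_of_gt (Finset.sum_pos (fun i _ => mul_pos (hα (c i)).1 (hγ i))
      ⟨⟨0, hn⟩, Finset.mem_univ _⟩)
  have hwj0 : ∀ (j : Fin k) (i : Fin n), (0:ℝ) ≤ if c i = j then γ i else 0 := fun j i => by
    by_cases h : c i = j <;> simp [h, le_of_lt (hγ i)]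
  have hwjsum : ∀ j : Fin k, (∑ i, if c i = j then γ i else 0) ≠ 0 := by
    intro j
    have e : (∑ i, if c i = j then γ i else 0) = ∑ i ∈ clSet c j, γ i := by
      rw [show clSet c j = Finset.univ.filter (fun i => c i = j) from rfl, Finset.sum_filter]
    rw [e]
    exact ne_of_gt (Finset.sum_pos (fun i _ => hγ i) (hc j))
  -- gradient formulas
  have hgphi : ∀ θ' : X n d, gradient (phi c γ α) θ'
      = OVB.wGrad (fun i => α (c i) * γ i) θ' := fun θ' => by
    rw [OVB.phi_eq c γ α]
    exact (OVB.hasGradientAt_wPhi _ hw0 hwsum θ').gradient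
  have hgpsi : ∀ (j : Fin k) (θ' : X n d), gradient (psi c γ j) θ'
      = OVB.wGrad (fun i => if c i = j then γ i else 0) θ' := fun j θ' => by
    rw [OVB.psi_eq c γ j]
    exact (OVB.hasGradientAt_wPhi _ (hwj0 j) (hwjsum j) θ').gradient
  have hgF : ∀ (j : Fin k) (θ' : X n d), gradient (clLoss c f j) θ'
      = (WithLp.toLp 2 (fun i => if i ∈ clSet c j then gradient (f i) (θ' i) else 0) : X n d) :=
    fun j θ' => (OVB.hasGradientAt_clLoss c f hf j θ').gradient
  -- difference vectors
  set A : X n d := WithLp.toLp 2 fun i => (α (c i) * γ i) •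
    ((θ i - θhat i) - (glAvg c γ α θ - glAvg c γ α θhat)) with hAdef
  set B : Fin k → X n d := fun j => WithLp.toLp 2 fun i => γ i •
    ((θ i - θhat i) - (clAvg c γ j θ - clAvg c γ j θhat)) with hBdef
  set Cv : X n d := WithLp.toLp 2 fun i => gradient (f i) (θ i) - gradient (f i) (θhat i) with hCdef
  have hAdiff : gradient (phi c γ α) θ - gradient (phi c γ α) θhat = A := by
    ext i : 1
    rw [hgphi θ, hgphi θhat, PiLp.sub_apply]
    simp only [OVB.wGrad]
    rw [← OVB.glAvg_eq c γ α θ, ← OVB.glAvg_eq c γ α θhat]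
    simp only [hAdef]
    module
  have hBdiff : ∀ j, gradient (psi c γ j) θ - gradient (psi c γ j) θhat
      = (WithLp.toLp 2 (fun i => if c i = j then B j i else 0) : X n d) := by
    intro j
    ext i : 1
    rw [hgpsi j θ, hgpsi j θhat, PiLp.sub_apply]
    simp only [OVB.wGrad]
    rw [← OVB.clAvg_eq c γ j θ, ← OVB.clAvg_eq c γ j θhat]
    simp only [hBdef]
    by_cases h : c i = j
    · simp only [if_pos h]
      module
    · simp only [if_neg h, zero_smul, sub_self]
  have hCdiff : ∀ j, gradient (clLoss c f j) θ - gradient (clLoss c f j) θhat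
      = (WithLp.toLp 2 (fun i => if c i = j then Cv i else 0) : X n d) := by
    intro j
    ext i
    rw [hgF j θ, hgF j θhat, PiLp.sub_apply]
    simp only [hCdef, OVB.mem_clSet]
    by_cases h : c i = j
    · simp [h]
    · simp [h]
  -- squared norms as per-cluster sums
  set NA : Fin k → ℝ := fun j => ∑ i ∈ clSet c j, ‖A i‖ ^ 2 with hNAdef
  set NAB : Fin k → ℝ :=
    fun j => ∑ i ∈ clSet c j, ‖A i + (τ j * (1 - α j)) • B j i‖ ^ 2 with hNABdef
  set NB : Fin k → ℝ := fun j => ∑ i ∈ clSet c j, ‖B j i‖ ^ 2 with hNBdef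
  set NC : Fin k → ℝ := fun j => ∑ i ∈ clSet c j, ‖Cv i‖ ^ 2 with hNCdef
  have hnA : ‖gradient (phi c γ α) θ - gradient (phi c γ α) θhat‖ ^ 2 = ∑ j, NA j := by
    rw [hAdiff, OVB.norm_sq_X]
    simp only [hNAdef]
    exact (OVB.fiber_sum c fun i _ => ‖A i‖ ^ 2).symm
  have hnB : ∀ j, ‖gradient (psi c γ j) θ - gradient (psi c γ j) θhat‖ ^ 2 = NB j := by
    intro j
    rw [hBdiff j, OVB.norm_sq_X]
    simp only [hNBdef]
    rw [show clSet c j = Finset.univ.filter (fun i => c i = j) from rfl, Finset.sum_filter]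
    exact Finset.sum_congr rfl fun i _ => by by_cases h : c i = j <;> simp [h]
  have hnC : ∀ j, ‖gradient (clLoss c f j) θ - gradient (clLoss c f j) θhat‖ ^ 2 = NC j := by
    intro j
    rw [hCdiff j, OVB.norm_sq_X]
    simp only [hNCdef]
    rw [show clSet c j = Finset.univ.filter (fun i => c i = j) from rfl, Finset.sum_filter]
    exact Finset.sum_congr rfl fun i _ => by by_cases h : c i = j <;> simp [h]
  -- the conditional second moments
  set T : Fin k → Bool → Bool → ℝ := fun j b0 b =>
    if b0 then (1 / p0) ^ 2 * NAB j
    else if b then ((1 - τ j) * (1 - α j) / ((1 - p0) * p j)) ^ 2 * NB j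
    else (1 / ((1 - p0) * (1 - p j))) ^ 2 * NC j with hTdef
  have hTt : ∀ j b, T j true b = (1 / p0) ^ 2 * NAB j := by
    intro j b; simp [hTdef]
  have hTft : ∀ j, T j false true
      = ((1 - τ j) * (1 - α j) / ((1 - p0) * p j)) ^ 2 * NB j := by
    intro j; simp [hTdef]
  have hTff : ∀ j, T j false false = (1 / ((1 - p0) * (1 - p j))) ^ 2 * NC j := by
    intro j; simp [hTdef]
  -- splitting the squared norm of the oracle difference
  have hsplit : ∀ ω : Outcome k,
      ‖Orc c γ α τ p0 p f θ ω - Orc c γ α τ p0 p f θhat ω‖ ^ 2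
        = ∑ j, T j ω.1 (ω.2 j) := by
    rintro ⟨b0, g⟩
    rw [OVB.norm_sq_X,
      ← OVB.fiber_sum c (fun i _ => ‖(Orc c γ α τ p0 p f θ (b0, g)
          - Orc c γ α τ p0 p f θhat (b0, g)) i‖ ^ 2)]
    refine Finset.sum_congr rfl fun j _ => ?_
    show ∑ i ∈ clSet c j, ‖(Orc c γ α τ p0 p f θ (b0, g)
        - Orc c γ α τ p0 p f θhat (b0, g)) i‖ ^ 2 = T j b0 (g j)
    cases b0 with
    | true =>
      rw [hTt j (g j)]
      simp only [hNABdef]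
      rw [Finset.mul_sum]
      refine Finset.sum_congr rfl fun i hi => ?_
      have hci : c i = j := OVB.mem_clSet.mp hi
      rw [← OVB.smul_sq]
      refine congrArg (fun v : E d => ‖v‖ ^ 2) ?_
      have ho : ∀ θ' : X n d, Orc c γ α τ p0 p f θ' (true, g) i
          = (γ i * α (c i) / p0) • (θ' i - glAvg c γ α θ')
            + (γ i * τ (c i) * (1 - α (c i)) / p0) • (θ' i - clAvg c γ (c i) θ') :=
        fun θ' => rfl
      rw [PiLp.sub_apply, ho θ, ho θhat]
      simp only [hAdef, hBdef, hci]
      module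
    | false =>
      cases hgv : g j with
      | true =>
        rw [hTft j]
        simp only [hNBdef]
        rw [Finset.mul_sum]
        refine Finset.sum_congr rfl fun i hi => ?_
        have hci : c i = j := OVB.mem_clSet.mp hi
        rw [← OVB.smul_sq]
        refine congrArg (fun v : E d => ‖v‖ ^ 2) ?_
        have ho : ∀ θ' : X n d, Orc c γ α τ p0 p f θ' (false, g) i
            = if g (c i)
              then (γ i * (1 - τ (c i)) * (1 - α (c i)) / ((1 - p0) * p (c i)))
                • (θ' i - clAvg c γ (c i) θ')
              else (1 / ((1 - p0) * (1 - p (c i)))) • gradient (f i) (θ' i) :=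
          fun θ' => rfl
        rw [PiLp.sub_apply, ho θ, ho θhat]
        simp only [hci, hgv, if_pos rfl, hBdef]
        simp only [if_true]
        module
      | false =>
        rw [hTff j]
        simp only [hNCdef]
        rw [Finset.mul_sum]
        refine Finset.sum_congr rfl fun i hi => ?_
        have hci : c i = j := OVB.mem_clSet.mp hi
        rw [← OVB.smul_sq]
        refine congrArg (fun v : E d => ‖v‖ ^ 2) ?_
        have ho : ∀ θ' : X n d, Orc c γ α τ p0 p f θ' (false, g) i
            = if g (c i)
              then (γ i * (1 - τ (c i)) * (1 - α (c i)) / ((1 - p0) * p (c i)))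
                • (θ' i - clAvg c γ (c i) θ')
              else (1 / ((1 - p0) * (1 - p (c i)))) • gradient (f i) (θ' i) :=
          fun θ' => rfl
        rw [PiLp.sub_apply, ho θ, ho θhat]
        simp only [hci, hgv, hCdef]
        simp only [Bool.false_eq_true, if_false]
        module
  -- the expectation
  have hmain : ∑ ω : Outcome k, wt p0 p ω *
      ‖Orc c γ α τ p0 p f θ ω - Orc c γ α τ p0 p f θhat ω‖ ^ 2
    = ∑ j, (p0 * (p j * T j true true + (1 - p j) * T j true false)
        + (1 - p0) * (p j * T j false true + (1 - p j) * T j false false)) := by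
    rw [show (∑ ω : Outcome k, wt p0 p ω *
        ‖Orc c γ α τ p0 p f θ ω - Orc c γ α τ p0 p f θhat ω‖ ^ 2)
        = ∑ ω : Outcome k, ∑ j, wt p0 p ω * T j ω.1 (ω.2 j) from
      Finset.sum_congr rfl fun ω _ => by rw [hsplit ω, Finset.mul_sum]]
    rw [Finset.sum_comm]
    exact Finset.sum_congr rfl fun j _ => OVB.sum_wt_eval p0 p j (T j)
  -- rewriting the right-hand side
  have hRHS : (2 / p0) * ‖gradient (phi c γ α) θ - gradient (phi c γ α) θhat‖ ^ 2
      + ∑ j, (2 * (1 - α j) ^ 2 / (p0 + 2 * (1 - p0) * p j)) *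
          ‖gradient (psi c γ j) θ - gradient (psi c γ j) θhat‖ ^ 2
      + (1 / (1 - p0)) * ∑ j, (1 / (1 - p j)) *
          ‖gradient (clLoss c f j) θ - gradient (clLoss c f j) θhat‖ ^ 2
      = ∑ j, ((2 / p0) * NA j
          + (2 * (1 - α j) ^ 2 / (p0 + 2 * (1 - p0) * p j)) * NB j
          + (1 / (1 - p0)) * ((1 / (1 - p j)) * NC j)) := by
    have hnB' : (∑ j, (2 * (1 - α j) ^ 2 / (p0 + 2 * (1 - p0) * p j)) *
          ‖gradient (psi c γ j) θ - gradient (psi c γ j) θhat‖ ^ 2)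
        = ∑ j, (2 * (1 - α j) ^ 2 / (p0 + 2 * (1 - p0) * p j)) * NB j :=
      Finset.sum_congr rfl fun j _ => by rw [hnB j]
    have hnC' : (∑ j, (1 / (1 - p j)) *
          ‖gradient (clLoss c f j) θ - gradient (clLoss c f j) θhat‖ ^ 2)
        = ∑ j, (1 / (1 - p j)) * NC j :=
      Finset.sum_congr rfl fun j _ => by rw [hnC j]
    rw [hnA, hnB', hnC', Finset.mul_sum, Finset.mul_sum,
      ← Finset.sum_add_distrib, ← Finset.sum_add_distrib]
  rw [hmain, hRHS]
  refine Finset.sum_le_sum fun j _ => ?_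
  -- per-cluster inequality
  have h2 : (1:ℝ) - p0 ≠ 0 := ne_of_gt h1p0
  have h3 : p j ≠ 0 := ne_of_gt (hp j).1
  have h4 : (1:ℝ) - p j ≠ 0 := ne_of_gt (by linarith [(hp j).2])
  have h5 : p0 + 2 * (1 - p0) * p j ≠ 0 := ne_of_gt (hq j)
  have h1 : p0 ≠ 0 := ne_of_gt hp00
  have hNA0 : 0 ≤ NA j := by
    simp only [hNAdef]; exact Finset.sum_nonneg fun i _ => sq_nonneg _
  have hNB0 : 0 ≤ NB j := by
    simp only [hNBdef]; exact Finset.sum_nonneg fun i _ => sq_nonneg _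
  have hNC0 : 0 ≤ NC j := by
    simp only [hNCdef]; exact Finset.sum_nonneg fun i _ => sq_nonneg _
  have hAB : NAB j ≤ 2 * NA j + 2 * (τ j * (1 - α j)) ^ 2 * NB j := by
    simp only [hNABdef, hNAdef, hNBdef]
    rw [Finset.mul_sum, Finset.mul_sum, ← Finset.sum_add_distrib]
    refine Finset.sum_le_sum fun i _ => ?_
    have h := OVB.sq_add_le (A i) ((τ j * (1 - α j)) • B j i)
    rw [OVB.smul_sq (τ j * (1 - α j)) (B j i)] at h
    linarith
  rw [hTt j true, hTt j false, hTft j, hTff j]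
  have e1 : p0 * (p j * ((1 / p0) ^ 2 * NAB j) + (1 - p j) * ((1 / p0) ^ 2 * NAB j))
      = (1 / p0) * NAB j := by
    field_simp
    ring
  have e2 : (1 - p0) * (p j * (((1 - τ j) * (1 - α j) / ((1 - p0) * p j)) ^ 2 * NB j)
        + (1 - p j) * ((1 / ((1 - p0) * (1 - p j))) ^ 2 * NC j))
      = ((1 - τ j) ^ 2 * (1 - α j) ^ 2 / ((1 - p0) * p j)) * NB j
        + (1 / (1 - p0)) * ((1 / (1 - p j)) * NC j) := by
    field_simp
  have e4c : (1 / p0) * (2 * ((p0 / (p0 + 2 * (1 - p0) * p j)) * (1 - α j)) ^ 2)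
        + (1 - p0 / (p0 + 2 * (1 - p0) * p j)) ^ 2 * (1 - α j) ^ 2 / ((1 - p0) * p j)
      = 2 * (1 - α j) ^ 2 / (p0 + 2 * (1 - p0) * p j) := by
    field_simp
    ring
  have e4 : (1 / p0) * (2 * (τ j * (1 - α j)) ^ 2 * NB j)
        + ((1 - τ j) ^ 2 * (1 - α j) ^ 2 / ((1 - p0) * p j)) * NB j
      = (2 * (1 - α j) ^ 2 / (p0 + 2 * (1 - p0) * p j)) * NB j := by
    rw [hτ j]
    linear_combination (NB j) * e4c
  have hmul : (1 / p0) * NAB j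
      ≤ (1 / p0) * (2 * NA j + 2 * (τ j * (1 - α j)) ^ 2 * NB j) :=
    mul_le_mul_of_nonneg_left hAB (by positivity)
  have expand : (1 / p0) * (2 * NA j + 2 * (τ j * (1 - α j)) ^ 2 * NB j)
      = (2 / p0) * NA j + (1 / p0) * (2 * (τ j * (1 - α j)) ^ 2 * NB j) := by ring
  linarith [e1, e2, e4, hmul, expand]
end
end

section
/- Suppose each f_i is μ-strongly convex and L-smooth, τ_j = p_0/(p_0 + 2(1−p_0)p_j) for each j, and let θ* be the unique minimizer of F. Define 𝓛 = max{ (2/p_0) max_{j} max_{i∈I_j} α_j γ_i , max_{j} [2(1−α_j) max_{i∈I_j} γ_i / (p_0 + 2(1−p_0)p_j)] , (L/(1−p_0)) max_{j} 1/(1−p_j) }. Then for all θ ∈ (ℝ^d)^n, the expectation over (ξ_0,…,ξ_k) satisfies E‖G(θ) − G(θ*)‖² ≤ 2𝓛 (F(θ) − F(θ*)). -/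
open scoped BigOperators

noncomputable section

/-- The full objective F(θ) = Σ_i f_i(θ_i) + Σ_j (1−α_j) ψ_j(θ) + φ(θ). -/
def objF {n k d : ℕ} (c : Fin n → Fin k) (γ : Fin n → ℝ) (α : Fin k → ℝ)
    (f : Fin n → E d → ℝ) (θ : X n d) : ℝ :=
  (∑ i, f i (θ i)) + (∑ j, (1 - α j) * psi c γ j θ) + phi c γ α θ

/-- The expected-smoothness constant 𝓛. -/
def esL {n k : ℕ} (hk : 0 < k) (c : Fin n → Fin k) (hc : ∀ j, (clSet c j).Nonempty)
    (γ : Fin n → ℝ) (α : Fin k → ℝ) (L p0 : ℝ) (p : Fin k → ℝ) : ℝ :=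
  max (max
    ((2 / p0) * Finset.univ.sup' (Finset.univ_nonempty_iff.mpr ⟨⟨0, hk⟩⟩)
      fun j => (clSet c j).sup' (hc j) fun i => α j * γ i)
    (Finset.univ.sup' (Finset.univ_nonempty_iff.mpr ⟨⟨0, hk⟩⟩)
      fun j => 2 * (1 - α j) * ((clSet c j).sup' (hc j) γ) / (p0 + 2 * (1 - p0) * p j)))
    ((L / (1 - p0)) * Finset.univ.sup' (Finset.univ_nonempty_iff.mpr ⟨⟨0, hk⟩⟩)
      fun j => 1 / (1 - p j))


open scoped BigOperators RealInnerProductSpace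

section Analysis

variable {F : Type*} [NormedAddCommGroup F] [InnerProductSpace ℝ F] [CompleteSpace F]

lemma hasDerivAt_line (f : F → ℝ) (hf : Differentiable ℝ f) (y v : F) (t : ℝ) :
    HasDerivAt (fun s : ℝ => f (y + s • v)) ⟪gradient f (y + t • v), v⟫ t := by
  have hline : HasDerivAt (fun s : ℝ => y + s • v) v t := by
    simpa using ((hasDerivAt_id t).smul_const v).const_add y
  have hgr : HasGradientAt f (gradient f (y + t • v)) (y + t • v) :=
    (hf _).hasGradientAt
  have hfd := (hasGradientAt_iff_hasFDerivAt).mp hgr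
  have := hfd.comp_hasDerivAt t hline
  simpa [InnerProductSpace.toDual_apply_apply, Function.comp_def] using this

lemma grad_convex_lower (f : F → ℝ) (hf : Differentiable ℝ f)
    (hc : ConvexOn ℝ Set.univ f) (x y : F) :
    f y + ⟪gradient f y, x - y⟫ ≤ f x := by
  set g : ℝ → ℝ := fun t => f (y + t • (x - y)) with hg
  have hconv : ConvexOn ℝ Set.univ g := by
    have := hc.comp_affineMap (AffineMap.lineMap y x : ℝ →ᵃ[ℝ] F)
    simp only [Set.preimage_univ] at this
    have heq : g = f ∘ ⇑(AffineMap.lineMap y x) := by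
      funext t
      simp [AffineMap.lineMap_apply, hg, vsub_eq_sub, vadd_eq_add, add_comm]
    rw [heq]
    exact this
  have hd : HasDerivAt g ⟪gradient f y, x - y⟫ 0 := by
    have := hasDerivAt_line f hf y (x - y) 0
    simpa using this
  have hs := hconv.le_slope_of_hasDerivAt (Set.mem_univ 0) (Set.mem_univ (1:ℝ))
    zero_lt_one hd
  have hg1 : g 1 = f x := by simp [hg]
  have hg0 : g 0 = f y := by simp [hg]
  rw [slope_def_field] at hs
  rw [hg1, hg0] at hs
  have : ⟪gradient f y, x - y⟫ ≤ f x - f y := by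
    simpa using hs
  linarith

lemma descent_lemma (f : F → ℝ) (hf : Differentiable ℝ f) {L : ℝ} (hL : 0 < L)
    (hsm : ∀ x y, ‖gradient f x - gradient f y‖ ≤ L * ‖x - y‖) (x y : F) :
    f x ≤ f y + ⟪gradient f y, x - y⟫ + L / 2 * ‖x - y‖ ^ 2 := by
  set v := x - y with hv
  have hgradcont : Continuous (gradient f) := by
    have : LipschitzWith L.toNNReal (gradient f) := by
      apply LipschitzWith.of_dist_le_mul
      intro a b
      rw [dist_eq_norm, dist_eq_norm]
      simpa [Real.coe_toNNReal L hL.le] using hsm a b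
    exact this.continuous
  set g : ℝ → ℝ := fun t => f (y + t • v) with hg
  set g' : ℝ → ℝ := fun t => ⟪gradient f (y + t • v), v⟫ with hg'
  have hderiv : ∀ t ∈ Set.uIcc (0:ℝ) 1, HasDerivAt g (g' t) t := fun t _ =>
    hasDerivAt_line f hf y v t
  have hcont : Continuous g' := by
    apply Continuous.inner
    · exact hgradcont.comp (by continuity)
    · exact continuous_const
  have hint : IntervalIntegrable g' MeasureTheory.volume 0 1 :=
    hcont.intervalIntegrable 0 1
  have hftc : ∫ t in (0:ℝ)..1, g' t = g 1 - g 0 :=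
    intervalIntegral.integral_eq_sub_of_hasDerivAt hderiv hint
  set u : ℝ → ℝ := fun t => ⟪gradient f y, v⟫ + (L * ‖v‖ ^ 2) * t with hu
  have hintu : IntervalIntegrable u MeasureTheory.volume 0 1 :=
    (by continuity : Continuous u).intervalIntegrable 0 1
  have hmono : ∀ t ∈ Set.Icc (0:ℝ) 1, g' t ≤ u t := by
    intro t ht
    have h1 : g' t - ⟪gradient f y, v⟫ = ⟪gradient f (y + t • v) - gradient f y, v⟫ := by
      rw [inner_sub_left]
    have h2 : ⟪gradient f (y + t • v) - gradient f y, v⟫ ≤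
        ‖gradient f (y + t • v) - gradient f y‖ * ‖v‖ := real_inner_le_norm _ _
    have h3 : ‖gradient f (y + t • v) - gradient f y‖ ≤ L * ‖t • v‖ := by
      simpa using hsm (y + t • v) y
    have h4 : ‖t • v‖ = t * ‖v‖ := by
      rw [norm_smul, Real.norm_eq_abs, abs_of_nonneg ht.1]
    have h5 : ‖gradient f (y + t • v) - gradient f y‖ * ‖v‖ ≤ L * t * ‖v‖ * ‖v‖ := by
      have := mul_le_mul_of_nonneg_right h3 (norm_nonneg v)
      rw [h4] at this
      nlinarith [norm_nonneg v]
    simp only [hu]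
    nlinarith
  have hle : ∫ t in (0:ℝ)..1, g' t ≤ ∫ t in (0:ℝ)..1, u t :=
    intervalIntegral.integral_mono_on zero_le_one hint hintu hmono
  have hval : ∫ t in (0:ℝ)..1, u t = ⟪gradient f y, v⟫ + L / 2 * ‖v‖ ^ 2 := by
    rw [hu]
    rw [intervalIntegral.integral_add (f := fun _ => ⟪gradient f y, v⟫)
      (g := fun t : ℝ => L * ‖v‖ ^ 2 * t) (intervalIntegrable_const)
      ((continuous_const.mul continuous_id').intervalIntegrable 0 1)]
    rw [intervalIntegral.integral_const_mul, integral_id]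
    simp
    ring
  have hg1 : g 1 = f x := by simp [hg, hv]
  have hg0 : g 0 = f y := by simp [hg]
  rw [hftc, hg1, hg0] at hle
  rw [hval] at hle
  linarith

lemma cocoercivity (f : F → ℝ) (hf : Differentiable ℝ f)
    (hc : ConvexOn ℝ Set.univ f) {L : ℝ} (hL : 0 < L)
    (hsm : ∀ x y, ‖gradient f x - gradient f y‖ ≤ L * ‖x - y‖) (x y : F) :
    ‖gradient f x - gradient f y‖ ^ 2 ≤
      2 * L * (f x - f y - ⟪gradient f y, x - y⟫) := by
  set g := gradient f x - gradient f y with hgdef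
  set w := x - L⁻¹ • g with hw
  have h1 := grad_convex_lower f hf hc w y
  have h2 := descent_lemma f hf hL hsm w x
  have hwx : w - x = -(L⁻¹ • g) := by rw [hw]; abel
  have hwy : w - y = (x - y) - L⁻¹ • g := by rw [hw]; abel
  have e1 : ⟪gradient f x, w - x⟫ = -(L⁻¹ * ⟪gradient f x, g⟫) := by
    rw [hwx, inner_neg_right, real_inner_smul_right]
  have e2 : ‖w - x‖ ^ 2 = L⁻¹ ^ 2 * ‖g‖ ^ 2 := by
    rw [hwx, norm_neg, norm_smul, Real.norm_eq_abs, mul_pow, sq_abs]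
  have e3 : ⟪gradient f y, w - y⟫ = ⟪gradient f y, x - y⟫ - L⁻¹ * ⟪gradient f y, g⟫ := by
    rw [hwy, inner_sub_right, real_inner_smul_right]
  have e4 : ⟪gradient f x, g⟫ - ⟪gradient f y, g⟫ = ‖g‖ ^ 2 := by
    rw [← inner_sub_left, ← hgdef, real_inner_self_eq_norm_sq]
  rw [e1, e2] at h2
  rw [e3] at h1
  have e5 : L⁻¹ * ⟪gradient f x, g⟫ - L⁻¹ * ⟪gradient f y, g⟫ = L⁻¹ * ‖g‖ ^ 2 := by
    rw [← mul_sub, e4]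
  have key : L⁻¹ * ‖g‖ ^ 2 - L / 2 * (L⁻¹ ^ 2 * ‖g‖ ^ 2) ≤
      f x - f y - ⟪gradient f y, x - y⟫ := by linarith
  have hsimp : L⁻¹ * ‖g‖ ^ 2 - L / 2 * (L⁻¹ ^ 2 * ‖g‖ ^ 2) = ‖g‖ ^ 2 / (2 * L) := by
    field_simp
    ring
  rw [hsimp] at key
  rw [div_le_iff₀ (by positivity) ] at key
  linarith [key]

end Analysis
section Marginal

lemma marginal_sum {k : ℕ} (w : Fin k → Bool → ℝ) (hw : ∀ j, w j true + w j false = 1)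
    (j0 : Fin k) (g : Bool → ℝ) :
    ∑ ξ : Fin k → Bool, (∏ j, w j (ξ j)) * g (ξ j0)
      = w j0 true * g true + w j0 false * g false := by
  have step1 : ∀ ξ : Fin k → Bool, (∏ j, w j (ξ j)) * g (ξ j0)
      = ∏ j, (w j (ξ j) * (if j = j0 then g (ξ j) else 1)) := by
    intro ξ
    rw [Finset.prod_mul_distrib, Finset.prod_ite_eq' Finset.univ j0 (fun j => g (ξ j))]
    simp
  simp_rw [step1]
  rw [← Fintype.prod_sum (fun j (b : Bool) => w j b * (if j = j0 then g b else 1))]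
  rw [Fintype.prod_eq_mul_prod_compl j0]
  have h1 : ∑ b : Bool, w j0 b * (if j0 = j0 then g b else 1)
      = w j0 true * g true + w j0 false * g false := by
    rw [Fintype.sum_bool]; simp
  have h2 : ∀ j ∈ ({j0}ᶜ : Finset (Fin k)),
      (∑ b : Bool, w j b * (if j = j0 then g b else 1)) = 1 := by
    intro j hj
    rw [Finset.mem_compl, Finset.mem_singleton] at hj
    rw [Fintype.sum_bool]
    simp [hj, hw j]
  rw [Finset.prod_congr rfl h2, Finset.prod_const_one, mul_one, h1]

lemma wt_expectation {k : ℕ} (p0 : ℝ) (p : Fin k → ℝ) (j0 : Fin k) (G : Bool → Bool → ℝ) :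
    ∑ ω : Outcome k, wt p0 p ω * G ω.1 (ω.2 j0)
      = p0 * (p j0 * G true true + (1 - p j0) * G true false)
        + (1 - p0) * (p j0 * G false true + (1 - p j0) * G false false) := by
  have hw : ∀ j, (if true then p j else 1 - p j) + (if false then p j else 1 - p j) = 1 := by
    intro j; simp
  rw [Fintype.sum_prod_type, Fintype.sum_bool]
  have ht : ∀ b : Bool, ∑ ξ : Fin k → Bool, wt p0 p (b, ξ) * G b (ξ j0)
      = (if b then p0 else 1 - p0) * (p j0 * G b true + (1 - p j0) * G b false) := by
    intro b
    have : ∀ ξ : Fin k → Bool, wt p0 p (b, ξ) * G b (ξ j0)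
        = (if b then p0 else 1 - p0) *
          ((∏ j, (if ξ j then p j else 1 - p j)) * G b (ξ j0)) := by
      intro ξ; rw [wt]; ring
    simp_rw [this, ← Finset.mul_sum]
    rw [marginal_sum (fun j (t : Bool) => if t then p j else 1 - p j) hw j0 (fun t => G b t)]
    simp
  rw [ht true, ht false]
  simp

end Marginal
section Averages

variable {n k d : ℕ} (c : Fin n → Fin k) (γ : Fin n → ℝ) (α : Fin k → ℝ)

lemma clAvg_sub (j : Fin k) (θ θ' : X n d) :
    clAvg c γ j (θ - θ') = clAvg c γ j θ - clAvg c γ j θ' := by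
  unfold clAvg
  rw [← smul_sub, ← Finset.sum_sub_distrib]
  congr 1
  refine Finset.sum_congr rfl fun i _ => ?_
  rw [PiLp.sub_apply, smul_sub]

lemma clAvg_smul (j : Fin k) (t : ℝ) (θ : X n d) :
    clAvg c γ j (t • θ) = t • clAvg c γ j θ := by
  unfold clAvg
  rw [smul_comm]
  congr 1
  rw [Finset.smul_sum]
  refine Finset.sum_congr rfl fun i _ => ?_
  rw [PiLp.smul_apply, smul_comm]

lemma glAvg_sub (θ θ' : X n d) :
    glAvg c γ α (θ - θ') = glAvg c γ α θ - glAvg c γ α θ' := by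
  unfold glAvg
  rw [← smul_sub, ← Finset.sum_sub_distrib]
  congr 1
  refine Finset.sum_congr rfl fun j _ => ?_
  rw [← Finset.sum_sub_distrib]
  refine Finset.sum_congr rfl fun i _ => ?_
  rw [PiLp.sub_apply, smul_sub]

lemma glAvg_smul (t : ℝ) (θ : X n d) :
    glAvg c γ α (t • θ) = t • glAvg c γ α θ := by
  unfold glAvg
  rw [smul_comm]
  congr 1
  rw [Finset.smul_sum]
  refine Finset.sum_congr rfl fun j _ => ?_
  rw [Finset.smul_sum]
  refine Finset.sum_congr rfl fun i _ => ?_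
  rw [PiLp.smul_apply, smul_comm]

lemma sum_centered_cl (j : Fin k) (θ : X n d) (hW : (∑ i ∈ clSet c j, γ i) ≠ 0) :
    ∑ i ∈ clSet c j, γ i • (θ i - clAvg c γ j θ) = 0 := by
  simp_rw [smul_sub]
  rw [Finset.sum_sub_distrib, ← Finset.sum_smul]
  unfold clAvg
  rw [smul_inv_smul₀ hW, sub_self]

lemma sum_centered_gl (θ : X n d)
    (hW : (∑ j, ∑ i ∈ clSet c j, α j * γ i) ≠ 0) :
    ∑ j, ∑ i ∈ clSet c j, (α j * γ i) • (θ i - glAvg c γ α θ) = 0 := by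
  simp_rw [smul_sub, Finset.sum_sub_distrib, ← Finset.sum_smul]
  unfold glAvg
  rw [smul_inv_smul₀ hW, sub_self]

lemma inner_sum_centered_cl (j : Fin k) (θ : X n d)
    (hW : (∑ i ∈ clSet c j, γ i) ≠ 0) (z : E d) :
    ∑ i ∈ clSet c j, γ i * ⟪θ i - clAvg c γ j θ, z⟫ = 0 := by
  have h0 := sum_centered_cl c γ j θ hW
  have : ∑ i ∈ clSet c j, γ i * ⟪θ i - clAvg c γ j θ, z⟫
      = ⟪∑ i ∈ clSet c j, γ i • (θ i - clAvg c γ j θ), z⟫ := by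
    rw [sum_inner]
    refine Finset.sum_congr rfl fun i _ => ?_
    rw [real_inner_smul_left]
  rw [this, h0, inner_zero_left]

lemma inner_sum_centered_gl (θ : X n d)
    (hW : (∑ j, ∑ i ∈ clSet c j, α j * γ i) ≠ 0) (z : E d) :
    ∑ j, ∑ i ∈ clSet c j, (α j * γ i) * ⟪θ i - glAvg c γ α θ, z⟫ = 0 := by
  have h0 := sum_centered_gl c γ α θ hW
  have : ∑ j, ∑ i ∈ clSet c j, (α j * γ i) * ⟪θ i - glAvg c γ α θ, z⟫
      = ⟪∑ j, ∑ i ∈ clSet c j, (α j * γ i) • (θ i - glAvg c γ α θ), z⟫ := by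
    rw [sum_inner]
    refine Finset.sum_congr rfl fun j _ => ?_
    rw [sum_inner]
    refine Finset.sum_congr rfl fun i _ => ?_
    rw [real_inner_smul_left]
  rw [this, h0, inner_zero_left]

lemma psi_shift (j : Fin k) (θ θ' : X n d) (hW : (∑ i ∈ clSet c j, γ i) ≠ 0) :
    psi c γ j θ = psi c γ j θ' + psi c γ j (θ - θ')
      + ∑ i ∈ clSet c j, γ i * ⟪θ' i - clAvg c γ j θ', θ i - θ' i⟫ := by
  have hpt : ∀ i ∈ clSet c j,
      γ i * ‖θ i - clAvg c γ j θ‖ ^ 2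
        = γ i * ‖θ' i - clAvg c γ j θ'‖ ^ 2
          + γ i * ‖(θ - θ') i - clAvg c γ j (θ - θ')‖ ^ 2
          + 2 * (γ i * ⟪θ' i - clAvg c γ j θ', (θ - θ') i - clAvg c γ j (θ - θ')⟫) := by
    intro i _
    have key : θ i - clAvg c γ j θ = (θ' i - clAvg c γ j θ')
        + ((θ - θ') i - clAvg c γ j (θ - θ')) := by
      rw [clAvg_sub, PiLp.sub_apply]; abel
    rw [key, norm_add_sq_real]; ring
  have cross : ∑ i ∈ clSet c j,
        γ i * ⟪θ' i - clAvg c γ j θ', (θ - θ') i - clAvg c γ j (θ - θ')⟫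
      = ∑ i ∈ clSet c j, γ i * ⟪θ' i - clAvg c γ j θ', (θ - θ') i⟫ := by
    have expand : ∀ i ∈ clSet c j,
        γ i * ⟪θ' i - clAvg c γ j θ', (θ - θ') i - clAvg c γ j (θ - θ')⟫
          = γ i * ⟪θ' i - clAvg c γ j θ', (θ - θ') i⟫
            - γ i * ⟪θ' i - clAvg c γ j θ', clAvg c γ j (θ - θ')⟫ := by
      intro i _
      rw [inner_sub_right]; ring
    rw [Finset.sum_congr rfl expand, Finset.sum_sub_distrib,
      inner_sum_centered_cl c γ j θ' hW (clAvg c γ j (θ - θ')), sub_zero]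
  unfold psi
  rw [Finset.sum_congr rfl hpt, Finset.sum_add_distrib, Finset.sum_add_distrib,
    ← Finset.mul_sum, cross]
  simp only [PiLp.sub_apply]
  ring

lemma phi_shift (θ θ' : X n d)
    (hW : (∑ j, ∑ i ∈ clSet c j, α j * γ i) ≠ 0) :
    phi c γ α θ = phi c γ α θ' + phi c γ α (θ - θ')
      + ∑ j, ∑ i ∈ clSet c j, (α j * γ i) * ⟪θ' i - glAvg c γ α θ', θ i - θ' i⟫ := by
  have hrw : ∀ ϑ : X n d, phi c γ α ϑ
      = 1/2 * ∑ j, ∑ i ∈ clSet c j, (α j * γ i) * ‖ϑ i - glAvg c γ α ϑ‖ ^ 2 := by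
    intro ϑ
    unfold phi
    congr 1
    refine Finset.sum_congr rfl fun j _ => ?_
    rw [Finset.mul_sum]
    refine Finset.sum_congr rfl fun i _ => ?_
    ring
  have hpt : ∀ j, ∀ i ∈ clSet c j,
      (α j * γ i) * ‖θ i - glAvg c γ α θ‖ ^ 2
        = (α j * γ i) * ‖θ' i - glAvg c γ α θ'‖ ^ 2
          + (α j * γ i) * ‖(θ - θ') i - glAvg c γ α (θ - θ')‖ ^ 2
          + 2 * ((α j * γ i) * ⟪θ' i - glAvg c γ α θ', (θ - θ') i⟫)
          + 2 * ((α j * γ i) * ⟪θ' i - glAvg c γ α θ', -(glAvg c γ α (θ - θ'))⟫) := by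
    intro j i _
    have key : θ i - glAvg c γ α θ = (θ' i - glAvg c γ α θ')
        + ((θ - θ') i - glAvg c γ α (θ - θ')) := by
      rw [glAvg_sub, PiLp.sub_apply]; abel
    rw [key, norm_add_sq_real, inner_sub_right, inner_neg_right]; ring
  rw [hrw θ, hrw θ', hrw (θ - θ')]
  have step : ∑ j, ∑ i ∈ clSet c j, (α j * γ i) * ‖θ i - glAvg c γ α θ‖ ^ 2
      = ∑ j, ∑ i ∈ clSet c j, ((α j * γ i) * ‖θ' i - glAvg c γ α θ'‖ ^ 2
          + (α j * γ i) * ‖(θ - θ') i - glAvg c γ α (θ - θ')‖ ^ 2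
          + 2 * ((α j * γ i) * ⟪θ' i - glAvg c γ α θ', (θ - θ') i⟫)
          + 2 * ((α j * γ i) * ⟪θ' i - glAvg c γ α θ', -(glAvg c γ α (θ - θ'))⟫)) := by
    refine Finset.sum_congr rfl fun j _ => Finset.sum_congr rfl fun i hi => hpt j i hi
  rw [step]
  simp_rw [Finset.sum_add_distrib]
  have e2 : ∀ x : Fin k → ℝ × ℝ, True := fun _ => trivial
  have hc2 : ∑ j, ∑ i ∈ clSet c j,
        2 * ((α j * γ i) * ⟪θ' i - glAvg c γ α θ', (θ - θ') i⟫)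
      = 2 * ∑ j, ∑ i ∈ clSet c j,
        ((α j * γ i) * ⟪θ' i - glAvg c γ α θ', (θ - θ') i⟫) := by
    rw [Finset.mul_sum]
    exact Finset.sum_congr rfl fun j _ => by rw [Finset.mul_sum]
  have hz2 : ∑ j, ∑ i ∈ clSet c j,
        2 * ((α j * γ i) * ⟪θ' i - glAvg c γ α θ', -(glAvg c γ α (θ - θ'))⟫)
      = 0 := by
    have h0 := inner_sum_centered_gl c γ α θ' hW (-(glAvg c γ α (θ - θ')))
    have : ∑ j, ∑ i ∈ clSet c j,
          2 * ((α j * γ i) * ⟪θ' i - glAvg c γ α θ', -(glAvg c γ α (θ - θ'))⟫)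
        = 2 * ∑ j, ∑ i ∈ clSet c j,
          ((α j * γ i) * ⟪θ' i - glAvg c γ α θ', -(glAvg c γ α (θ - θ'))⟫) := by
      rw [Finset.mul_sum]
      exact Finset.sum_congr rfl fun j _ => by rw [Finset.mul_sum]
    rw [this, h0, mul_zero]
  rw [hc2, hz2, add_zero]
  simp only [PiLp.sub_apply]
  ring

lemma psi_smul (j : Fin k) (t : ℝ) (θ : X n d) :
    psi c γ j (t • θ) = t ^ 2 * psi c γ j θ := by
  have hpt : ∀ i ∈ clSet c j, γ i * ‖(t • θ) i - clAvg c γ j (t • θ)‖ ^ 2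
      = t ^ 2 * (γ i * ‖θ i - clAvg c γ j θ‖ ^ 2) := by
    intro i _
    rw [clAvg_smul, PiLp.smul_apply, ← smul_sub, norm_smul, Real.norm_eq_abs,
      mul_pow, sq_abs]
    ring
  unfold psi
  rw [Finset.sum_congr rfl hpt, ← Finset.mul_sum]
  ring

lemma phi_smul (t : ℝ) (θ : X n d) :
    phi c γ α (t • θ) = t ^ 2 * phi c γ α θ := by
  have hpt : ∀ j ∈ (Finset.univ : Finset (Fin k)),
      α j * ∑ i ∈ clSet c j, γ i * ‖(t • θ) i - glAvg c γ α (t • θ)‖ ^ 2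
        = t ^ 2 * (α j * ∑ i ∈ clSet c j, γ i * ‖θ i - glAvg c γ α θ‖ ^ 2) := by
    intro j _
    have h : ∀ i ∈ clSet c j, γ i * ‖(t • θ) i - glAvg c γ α (t • θ)‖ ^ 2
        = t ^ 2 * (γ i * ‖θ i - glAvg c γ α θ‖ ^ 2) := by
      intro i _
      rw [glAvg_smul, PiLp.smul_apply, ← smul_sub, norm_smul, Real.norm_eq_abs,
        mul_pow, sq_abs]
      ring
    rw [Finset.sum_congr rfl h, ← Finset.mul_sum]
    ring
  unfold phi
  rw [Finset.sum_congr rfl hpt, ← Finset.mul_sum]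
  ring

lemma psi_nonneg (j : Fin k) (θ : X n d) (hγ : ∀ i, 0 < γ i) :
    0 ≤ psi c γ j θ := by
  unfold psi
  have : ∀ i ∈ clSet c j, 0 ≤ γ i * ‖θ i - clAvg c γ j θ‖ ^ 2 := fun i _ =>
    mul_nonneg (hγ i).le (sq_nonneg _)
  have := Finset.sum_nonneg this
  linarith

lemma phi_nonneg (θ : X n d) (hγ : ∀ i, 0 < γ i) (hα : ∀ j, α j ∈ Set.Ioc (0:ℝ) 1) :
    0 ≤ phi c γ α θ := by
  unfold phi
  have : ∀ j ∈ (Finset.univ : Finset (Fin k)),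
      0 ≤ α j * ∑ i ∈ clSet c j, γ i * ‖θ i - glAvg c γ α θ‖ ^ 2 := by
    intro j _
    exact mul_nonneg (hα j).1.le (Finset.sum_nonneg fun i _ =>
      mul_nonneg (hγ i).le (sq_nonneg _))
  have := Finset.sum_nonneg this
  linarith

end Averages
section Helpers

variable {F : Type*} [NormedAddCommGroup F] [InnerProductSpace ℝ F]

lemma norm_smul_sq (a : ℝ) (x : F) : ‖a • x‖ ^ 2 = a ^ 2 * ‖x‖ ^ 2 := by
  rw [norm_smul, Real.norm_eq_abs, mul_pow, sq_abs]

lemma smul_add_sq_le (a b : ℝ) (x y : F) :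
    ‖a • x + b • y‖ ^ 2 ≤ 2 * a ^ 2 * ‖x‖ ^ 2 + 2 * b ^ 2 * ‖y‖ ^ 2 := by
  have h := norm_add_le (a • x) (b • y)
  have hx : ‖a • x‖ ^ 2 = a ^ 2 * ‖x‖ ^ 2 := norm_smul_sq a x
  have hy : ‖b • y‖ ^ 2 = b ^ 2 * ‖y‖ ^ 2 := norm_smul_sq b y
  nlinarith [sq_nonneg (‖a • x‖ - ‖b • y‖), norm_nonneg (a • x + b • y),
    norm_nonneg (a • x), norm_nonneg (b • y)]

end Helpers

section Cross

variable {n k d : ℕ} (c : Fin n → Fin k) (γ : Fin n → ℝ) (α : Fin k → ℝ)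

/-- Cross (linear) term for ψ_j in the Bregman-type expansion around `θstar`. -/
def crossPsi (j : Fin k) (θstar ϑ : X n d) : ℝ :=
  ∑ i ∈ clSet c j, γ i * ⟪θstar i - clAvg c γ j θstar, ϑ i - θstar i⟫

/-- Cross (linear) term for φ in the Bregman-type expansion around `θstar`. -/
def crossPhi (θstar ϑ : X n d) : ℝ :=
  ∑ j, ∑ i ∈ clSet c j, (α j * γ i) * ⟪θstar i - glAvg c γ α θstar, ϑ i - θstar i⟫

lemma line_sub_apply (θstar δ : X n d) (t : ℝ) (i : Fin n) :
    (θstar + t • δ) i - θstar i = t • δ i := by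
  rw [PiLp.add_apply, PiLp.smul_apply]
  abel

lemma crossPsi_line (j : Fin k) (θstar δ : X n d) (t : ℝ) :
    crossPsi c γ j θstar (θstar + t • δ) = t * crossPsi c γ j θstar (θstar + δ) := by
  unfold crossPsi
  rw [Finset.mul_sum]
  refine Finset.sum_congr rfl fun i _ => ?_
  have h1 : (θstar + t • δ) i - θstar i = t • δ i := line_sub_apply θstar δ t i
  have h2 : (θstar + δ) i - θstar i = δ i := by
    have := line_sub_apply θstar δ 1 i
    simpa using this
  rw [h1, h2, real_inner_smul_right]
  ring

lemma crossPhi_line (θstar δ : X n d) (t : ℝ) :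
    crossPhi c γ α θstar (θstar + t • δ) = t * crossPhi c γ α θstar (θstar + δ) := by
  unfold crossPhi
  rw [Finset.mul_sum]
  refine Finset.sum_congr rfl fun j _ => ?_
  rw [Finset.mul_sum]
  refine Finset.sum_congr rfl fun i _ => ?_
  have h1 : (θstar + t • δ) i - θstar i = t • δ i := line_sub_apply θstar δ t i
  have h2 : (θstar + δ) i - θstar i = δ i := by
    have := line_sub_apply θstar δ 1 i
    simpa using this
  rw [h1, h2, real_inner_smul_right]
  ring

lemma sum_partition (g : Fin n → ℝ) : ∑ i, g i = ∑ j, ∑ i ∈ clSet c j, g i := by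
  have := Finset.sum_fiberwise_of_maps_to (s := (Finset.univ : Finset (Fin n)))
    (t := (Finset.univ : Finset (Fin k))) (g := c)
    (fun i _ => Finset.mem_univ (c i)) g
  unfold clSet
  exact this.symm

lemma objF_identity (f : Fin n → E d → ℝ) (θstar ϑ : X n d)
    (hWne : ∀ j, (∑ i ∈ clSet c j, γ i) ≠ 0)
    (hWgne : (∑ j, ∑ i ∈ clSet c j, α j * γ i) ≠ 0) :
    objF c γ α f ϑ - objF c γ α f θstar
      = (∑ i, (f i (ϑ i) - f i (θstar i)))
        + ((∑ j, (1 - α j) * psi c γ j (ϑ - θstar)) + phi c γ α (ϑ - θstar))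
        + ((∑ j, (1 - α j) * crossPsi c γ j θstar ϑ) + crossPhi c γ α θstar ϑ) := by
  have hψ : ∀ j, psi c γ j ϑ
      = psi c γ j θstar + psi c γ j (ϑ - θstar) + crossPsi c γ j θstar ϑ :=
    fun j => psi_shift c γ j ϑ θstar (hWne j)
  have hφ : phi c γ α ϑ
      = phi c γ α θstar + phi c γ α (ϑ - θstar) + crossPhi c γ α θstar ϑ :=
    phi_shift c γ α ϑ θstar hWgne
  have hψsum : ∑ j, (1 - α j) * psi c γ j ϑ
      = ∑ j, ((1 - α j) * psi c γ j θstar + ((1 - α j) * psi c γ j (ϑ - θstar)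
          + (1 - α j) * crossPsi c γ j θstar ϑ)) := by
    refine Finset.sum_congr rfl fun j _ => ?_
    rw [hψ j]; ring
  unfold objF
  rw [hψsum, hφ]
  simp_rw [Finset.sum_add_distrib]
  rw [Finset.sum_sub_distrib]
  ring

end Cross

section Coef

lemma coefA_eq (p0 x : ℝ) (h : p0 ≠ 0) :
    p0 * (2 * (x / p0) ^ 2) = (2 / p0) * x ^ 2 := by
  field_simp

lemma coefB_eq (p0 q gm am : ℝ) (h0 : 0 < p0) (h1 : p0 < 1) (hq : 0 < q) :
    p0 * (2 * (gm * (p0 / (p0 + 2 * (1 - p0) * q)) * am / p0) ^ 2)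
      + (1 - p0) * q *
        (gm * (1 - p0 / (p0 + 2 * (1 - p0) * q)) * am / ((1 - p0) * q)) ^ 2
    = 2 * (gm * am) ^ 2 / (p0 + 2 * (1 - p0) * q) := by
  have hs : 0 < p0 + 2 * (1 - p0) * q := by nlinarith
  have h1' : (1:ℝ) - p0 ≠ 0 := by linarith
  have hq' : q ≠ 0 := hq.ne'
  have hs' : p0 + 2 * (1 - p0) * q ≠ 0 := hs.ne'
  field_simp
  ring

lemma coefC_eq (u v : ℝ) (hu : u ≠ 0) (hv : v ≠ 0) :
    u * (v * (1 / (u * v)) ^ 2) = 1 / (u * v) := by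
  field_simp

end Coef
section PerIndex

lemma perIndex_bound (p0 q τ αi γi M1 M2 M3 L aT bT cT nA nB ng Di : ℝ)
    (hp0 : 0 < p0) (hp0' : p0 < 1) (hq : 0 < q) (hq' : q < 1)
    (hτ : τ = p0 / (p0 + 2 * (1 - p0) * q))
    (hnA : 0 ≤ nA) (hnB : 0 ≤ nB) (hDi : 0 ≤ Di) (hL : 0 < L)
    (haT : aT ≤ 2 * (γi * αi / p0) ^ 2 * nA + 2 * (γi * τ * (1 - αi) / p0) ^ 2 * nB)
    (hbT : bT = (γi * (1 - τ) * (1 - αi) / ((1 - p0) * q)) ^ 2 * nB)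
    (hcT : cT = (1 / ((1 - p0) * (1 - q))) ^ 2 * ng)
    (hg2 : ng ≤ 2 * L * Di)
    (hA1 : (2 / p0) * (γi * αi) ^ 2 ≤ M1 * (αi * γi))
    (hB1 : 2 * (γi * (1 - αi)) ^ 2 / (p0 + 2 * (1 - p0) * q) ≤ M2 * ((1 - αi) * γi))
    (hC1 : L / ((1 - p0) * (1 - q)) ≤ M3) :
    p0 * aT + (1 - p0) * (q * bT + (1 - q) * cT)
      ≤ M1 * (αi * (γi * nA)) + M2 * ((1 - αi) * (γi * nB)) + 2 * M3 * Di := by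
  have hs : 0 < p0 + 2 * (1 - p0) * q := by nlinarith
  have hcoefA : p0 * (2 * (γi * αi / p0) ^ 2) = (2 / p0) * (γi * αi) ^ 2 :=
    coefA_eq p0 (γi * αi) hp0.ne'
  have hcoefB : p0 * (2 * (γi * τ * (1 - αi) / p0) ^ 2)
      + (1 - p0) * q * (γi * (1 - τ) * (1 - αi) / ((1 - p0) * q)) ^ 2
      = 2 * (γi * (1 - αi)) ^ 2 / (p0 + 2 * (1 - p0) * q) := by
    rw [hτ]
    exact coefB_eq p0 q γi (1 - αi) hp0 hp0' hq
  have hcoefC : (1 - p0) * ((1 - q) * (1 / ((1 - p0) * (1 - q))) ^ 2)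
      = 1 / ((1 - p0) * (1 - q)) :=
    coefC_eq (1 - p0) (1 - q) (by linarith) (by linarith)
  have hc3 : 0 < 1 / ((1 - p0) * (1 - q)) := by
    have h1 : (0:ℝ) < 1 - p0 := by linarith
    have h2 : (0:ℝ) < 1 - q := by linarith
    positivity
  -- three term bounds
  have tA : (p0 * (2 * (γi * αi / p0) ^ 2)) * nA ≤ M1 * (αi * (γi * nA)) := by
    rw [hcoefA]
    have := mul_le_mul_of_nonneg_right hA1 hnA
    linarith [this]
  have tB : (p0 * (2 * (γi * τ * (1 - αi) / p0) ^ 2)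
        + (1 - p0) * q * (γi * (1 - τ) * (1 - αi) / ((1 - p0) * q)) ^ 2) * nB
      ≤ M2 * ((1 - αi) * (γi * nB)) := by
    rw [hcoefB]
    have := mul_le_mul_of_nonneg_right hB1 hnB
    linarith [this]
  have tC : ((1 - p0) * ((1 - q) * (1 / ((1 - p0) * (1 - q))) ^ 2)) * ng ≤ 2 * M3 * Di := by
    rw [hcoefC]
    have s1 : 1 / ((1 - p0) * (1 - q)) * ng ≤ 1 / ((1 - p0) * (1 - q)) * (2 * L * Di) :=
      mul_le_mul_of_nonneg_left hg2 hc3.le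
    have s2 : 1 / ((1 - p0) * (1 - q)) * (2 * L * Di)
        = (L / ((1 - p0) * (1 - q))) * (2 * Di) := by ring
    have s3 : (L / ((1 - p0) * (1 - q))) * (2 * Di) ≤ M3 * (2 * Di) :=
      mul_le_mul_of_nonneg_right hC1 (by linarith)
    calc 1 / ((1 - p0) * (1 - q)) * ng
        ≤ 1 / ((1 - p0) * (1 - q)) * (2 * L * Di) := s1
      _ = (L / ((1 - p0) * (1 - q))) * (2 * Di) := s2
      _ ≤ M3 * (2 * Di) := s3
      _ = 2 * M3 * Di := by ring
  have hmain : p0 * aT ≤ (p0 * (2 * (γi * αi / p0) ^ 2)) * nA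
      + (p0 * (2 * (γi * τ * (1 - αi) / p0) ^ 2)) * nB := by
    have := mul_le_mul_of_nonneg_left haT hp0.le
    linarith [this]
  have hbc : (1 - p0) * (q * bT + (1 - q) * cT)
      = ((1 - p0) * q * (γi * (1 - τ) * (1 - αi) / ((1 - p0) * q)) ^ 2) * nB
        + ((1 - p0) * ((1 - q) * (1 / ((1 - p0) * (1 - q))) ^ 2)) * ng := by
    rw [hbT, hcT]
    ring
  linarith [hmain, hbc, tA, tB, tC]

end PerIndex
set_option maxHeartbeats 1000000 in
/-- expected smoothness of the Async-L2GD oracle: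
E‖G(θ) − G(θ*)‖² ≤ 2𝓛(F(θ) − F(θ*)). -/
theorem oracle_expected_smoothness {n k d : ℕ} (hk : 0 < k)
    (c : Fin n → Fin k) (hc : ∀ j, (clSet c j).Nonempty)
    (γ : Fin n → ℝ) (hγ : ∀ i, 0 < γ i)
    (α : Fin k → ℝ) (hα : ∀ j, α j ∈ Set.Ioc (0 : ℝ) 1)
    (f : Fin n → E d → ℝ) (μ L : ℝ) (hμ : 0 < μ) (hL : 0 < L)
    (hdiff : ∀ i, Differentiable ℝ (f i))
    (hsc : ∀ i, ConvexOn ℝ Set.univ (fun x => f i x - μ / 2 * ‖x‖ ^ 2))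
    (hsm : ∀ i, ∀ x y, ‖gradient (f i) x - gradient (f i) y‖ ≤ L * ‖x - y‖)
    (p0 : ℝ) (hp0 : p0 ∈ Set.Ioo (0 : ℝ) 1)
    (p : Fin k → ℝ) (hp : ∀ j, p j ∈ Set.Ioo (0 : ℝ) 1)
    (τ : Fin k → ℝ) (hτ : ∀ j, τ j = p0 / (p0 + 2 * (1 - p0) * p j))
    (θstar : X n d) (hmin : ∀ θ, objF c γ α f θstar ≤ objF c γ α f θ) :
    ∀ θ : X n d,
      ∑ ω : Outcome k, wt p0 p ω *
          ‖Orc c γ α τ p0 p f θ ω - Orc c γ α τ p0 p f θstar ω‖ ^ 2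
        ≤ 2 * esL hk c hc γ α L p0 p * (objF c γ α f θ - objF c γ α f θstar) := by
  intro θ
  obtain ⟨hp0pos, hp0lt⟩ := hp0
  -- basic positivity
  have hWne : ∀ j, (∑ i ∈ clSet c j, γ i) ≠ 0 := fun j =>
    (Finset.sum_pos (fun i _ => hγ i) (hc j)).ne'
  have hWgne : (∑ j, ∑ i ∈ clSet c j, α j * γ i) ≠ 0 := by
    refine (Finset.sum_pos (fun j _ => Finset.sum_pos
      (fun i _ => mul_pos (hα j).1 (hγ i)) (hc j)) ?_).ne'
    exact Finset.univ_nonempty_iff.mpr ⟨⟨0, hk⟩⟩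
  have hconv : ∀ i, ConvexOn ℝ Set.univ (f i) := by
    intro i
    have hstrong : StrongConvexOn Set.univ μ (f i) := strongConvexOn_iff_convex.mpr (hsc i)
    exact hstrong.convexOn (fun r => by positivity)
  set Δ : X n d := θ - θstar with hΔ
  set A : Fin n → E d := fun i => Δ i - glAvg c γ α Δ with hA
  set Bv : Fin n → E d := fun i => Δ i - clAvg c γ (c i) Δ with hB
  set g : Fin n → E d := fun i => gradient (f i) (θ i) - gradient (f i) (θstar i) with hgdef
  set D : Fin n → ℝ := fun i =>
    f i (θ i) - f i (θstar i) - ⟪gradient (f i) (θstar i), θ i - θstar i⟫ with hDdef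
  have hD : ∀ i, 0 ≤ D i := by
    intro i
    have := grad_convex_lower (f i) (hdiff i) (hconv i) (θ i) (θstar i)
    simp only [hDdef]
    linarith
  have hg2 : ∀ i, ‖g i‖ ^ 2 ≤ 2 * L * D i := by
    intro i
    have := cocoercivity (f i) (hdiff i) (hconv i) hL (hsm i) (θ i) (θstar i)
    simp only [hgdef, hDdef]
    linarith
  -- the three constants
  set M1 : ℝ := (2 / p0) * Finset.univ.sup' (Finset.univ_nonempty_iff.mpr ⟨⟨0, hk⟩⟩)
      (fun j => (clSet c j).sup' (hc j) fun i => α j * γ i) with hM1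
  set M2 : ℝ := Finset.univ.sup' (Finset.univ_nonempty_iff.mpr ⟨⟨0, hk⟩⟩)
      (fun j => 2 * (1 - α j) * ((clSet c j).sup' (hc j) γ) / (p0 + 2 * (1 - p0) * p j))
      with hM2
  set M3 : ℝ := (L / (1 - p0)) * Finset.univ.sup' (Finset.univ_nonempty_iff.mpr ⟨⟨0, hk⟩⟩)
      (fun j => 1 / (1 - p j)) with hM3
  have hesL : esL hk c hc γ α L p0 p = max (max M1 M2) M3 := rfl
  -- per-index closed form of the expectation
  have horc : ∀ (ω : Outcome k) (i : Fin n),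
      (Orc c γ α τ p0 p f θ ω - Orc c γ α τ p0 p f θstar ω) i
      = if ω.1 then (γ i * α (c i) / p0) • A i
            + (γ i * τ (c i) * (1 - α (c i)) / p0) • Bv i
        else if ω.2 (c i) then
          (γ i * (1 - τ (c i)) * (1 - α (c i)) / ((1 - p0) * p (c i))) • Bv i
        else (1 / ((1 - p0) * (1 - p (c i)))) • g i := by
    intro ω i
    have hglobal : Δ i - glAvg c γ α Δ
        = (θ i - glAvg c γ α θ) - (θstar i - glAvg c γ α θstar) := by
      rw [hΔ, glAvg_sub, PiLp.sub_apply]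
      abel
    have hcluster : Δ i - clAvg c γ (c i) Δ
        = (θ i - clAvg c γ (c i) θ) - (θstar i - clAvg c γ (c i) θstar) := by
      rw [hΔ, clAvg_sub, PiLp.sub_apply]
      abel
    obtain ⟨b, ξ⟩ := ω
    rw [PiLp.sub_apply]
    cases b with
    | true =>
        simp only [Orc, if_true, hA, hB]
        rw [hglobal, hcluster]
        simp only [smul_sub]
        abel
    | false =>
        cases hξ : ξ (c i) with
        | true =>
            simp only [Orc, hξ, if_false, if_true, Bool.false_eq_true, hB]
            rw [hcluster]
            simp only [smul_sub]
        | false =>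
            simp only [Orc, hξ, if_false, Bool.false_eq_true, hgdef]
            rw [smul_sub]
  set aT : Fin n → ℝ := fun i => ‖(γ i * α (c i) / p0) • A i
      + (γ i * τ (c i) * (1 - α (c i)) / p0) • Bv i‖ ^ 2 with haT
  set bT : Fin n → ℝ := fun i =>
      ‖(γ i * (1 - τ (c i)) * (1 - α (c i)) / ((1 - p0) * p (c i))) • Bv i‖ ^ 2 with hbT
  set cT : Fin n → ℝ := fun i => ‖(1 / ((1 - p0) * (1 - p (c i)))) • g i‖ ^ 2 with hcT
  have hE : ∑ ω : Outcome k, wt p0 p ω *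
        ‖Orc c γ α τ p0 p f θ ω - Orc c γ α τ p0 p f θstar ω‖ ^ 2
      = ∑ i, (p0 * aT i + (1 - p0) * (p (c i) * bT i + (1 - p (c i)) * cT i)) := by
    have h1 : ∀ ω : Outcome k, ‖Orc c γ α τ p0 p f θ ω - Orc c γ α τ p0 p f θstar ω‖ ^ 2
        = ∑ i, ‖(Orc c γ α τ p0 p f θ ω - Orc c γ α τ p0 p f θstar ω) i‖ ^ 2 :=
      fun ω => PiLp.norm_sq_eq_of_L2 _ _
    simp_rw [h1, Finset.mul_sum]
    rw [Finset.sum_comm]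
    refine Finset.sum_congr rfl fun i _ => ?_
    have hterm : ∀ ω : Outcome k,
        wt p0 p ω * ‖(Orc c γ α τ p0 p f θ ω - Orc c γ α τ p0 p f θstar ω) i‖ ^ 2
        = wt p0 p ω *
          (fun (b t : Bool) => if b then aT i else if t then bT i else cT i) ω.1 (ω.2 (c i)) := by
      intro ω
      rw [horc ω i]
      congr 1
      rw [apply_ite (fun v : E d => ‖v‖ ^ 2), apply_ite (fun v : E d => ‖v‖ ^ 2)]
    rw [Finset.sum_congr rfl fun ω _ => hterm ω,
      wt_expectation p0 p (c i) (fun b t => if b then aT i else if t then bT i else cT i)]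
    simp only [if_true, if_false, Bool.false_eq_true]
    ring
  -- per-index bound
  have hbound : ∀ i, p0 * aT i + (1 - p0) * (p (c i) * bT i + (1 - p (c i)) * cT i)
      ≤ M1 * (α (c i) * (γ i * ‖A i‖ ^ 2))
        + M2 * ((1 - α (c i)) * (γ i * ‖Bv i‖ ^ 2)) + 2 * M3 * D i := by
    intro i
    obtain ⟨hpj, hpj1⟩ := hp (c i)
    obtain ⟨hαp, hα1⟩ := hα (c i)
    have hγi := hγ i
    have hmemi : i ∈ clSet c (c i) := by simp [clSet]
    have haTb : aT i ≤ 2 * (γ i * α (c i) / p0) ^ 2 * ‖A i‖ ^ 2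
        + 2 * (γ i * τ (c i) * (1 - α (c i)) / p0) ^ 2 * ‖Bv i‖ ^ 2 := by
      rw [haT]
      exact smul_add_sq_le _ _ _ _
    have hbTe : bT i = (γ i * (1 - τ (c i)) * (1 - α (c i)) / ((1 - p0) * p (c i))) ^ 2
        * ‖Bv i‖ ^ 2 := norm_smul_sq _ _
    have hcTe : cT i = (1 / ((1 - p0) * (1 - p (c i)))) ^ 2 * ‖g i‖ ^ 2 := norm_smul_sq _ _
    have hsupA : α (c i) * γ i ≤ Finset.univ.sup' (Finset.univ_nonempty_iff.mpr ⟨⟨0, hk⟩⟩)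
        (fun j => (clSet c j).sup' (hc j) fun i' => α j * γ i') :=
      le_trans (Finset.le_sup' (fun i' => α (c i) * γ i') hmemi)
        (Finset.le_sup' (fun j => (clSet c j).sup' (hc j) fun i' => α j * γ i')
          (Finset.mem_univ (c i)))
    have hA1 : (2 / p0) * (γ i * α (c i)) ^ 2 ≤ M1 * (α (c i) * γ i) := by
      rw [hM1]
      have hpos : (0:ℝ) < 2 / p0 := div_pos two_pos hp0pos
      have hag : 0 < α (c i) * γ i := mul_pos hαp hγi
      have key := mul_le_mul_of_nonneg_left
        (mul_le_mul_of_nonneg_right hsupA hag.le) hpos.le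
      linarith [key]
    have hsupγ : γ i ≤ (clSet c (c i)).sup' (hc (c i)) γ := Finset.le_sup' γ hmemi
    have hsupB : 2 * (1 - α (c i)) * ((clSet c (c i)).sup' (hc (c i)) γ)
          / (p0 + 2 * (1 - p0) * p (c i)) ≤ M2 := by
      rw [hM2]
      exact Finset.le_sup' (fun j => 2 * (1 - α j) * ((clSet c j).sup' (hc j) γ)
        / (p0 + 2 * (1 - p0) * p j)) (Finset.mem_univ (c i))
    have hs : 0 < p0 + 2 * (1 - p0) * p (c i) := by nlinarith
    have hB1 : 2 * (γ i * (1 - α (c i))) ^ 2 / (p0 + 2 * (1 - p0) * p (c i))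
        ≤ M2 * ((1 - α (c i)) * γ i) := by
      have step1 : 2 * (γ i * (1 - α (c i))) ^ 2 / (p0 + 2 * (1 - p0) * p (c i))
          = (2 * (1 - α (c i)) * γ i / (p0 + 2 * (1 - p0) * p (c i)))
            * ((1 - α (c i)) * γ i) := by
        field_simp
      have step2 : 2 * (1 - α (c i)) * γ i / (p0 + 2 * (1 - p0) * p (c i))
          ≤ 2 * (1 - α (c i)) * ((clSet c (c i)).sup' (hc (c i)) γ)
            / (p0 + 2 * (1 - p0) * p (c i)) := by
        gcongr
      rw [step1]
      have hfac : 0 ≤ (1 - α (c i)) * γ i := mul_nonneg (by linarith) hγi.le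
      exact mul_le_mul_of_nonneg_right (le_trans step2 hsupB) hfac
    have hsupC : 1 / (1 - p (c i)) ≤ Finset.univ.sup' (Finset.univ_nonempty_iff.mpr ⟨⟨0, hk⟩⟩)
        (fun j => 1 / (1 - p j)) := Finset.le_sup' (fun j => 1 / (1 - p j)) (Finset.mem_univ (c i))
    have hC1 : L / ((1 - p0) * (1 - p (c i))) ≤ M3 := by
      rw [hM3]
      have heq : L / ((1 - p0) * (1 - p (c i))) = (L / (1 - p0)) * (1 / (1 - p (c i))) := by
        field_simp
      rw [heq]
      exact mul_le_mul_of_nonneg_left hsupC (le_of_lt (div_pos hL (by linarith)))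
    exact perIndex_bound p0 (p (c i)) (τ (c i)) (α (c i)) (γ i) M1 M2 M3 L
      (aT i) (bT i) (cT i) (‖A i‖ ^ 2) (‖Bv i‖ ^ 2) (‖g i‖ ^ 2) (D i)
      hp0pos hp0lt hpj hpj1 (hτ (c i)) (sq_nonneg _) (sq_nonneg _) (hD i) hL
      haTb hbTe hcTe (hg2 i) hA1 hB1 hC1
  -- summation of the bound
  have hsum1 : ∑ i, α (c i) * (γ i * ‖A i‖ ^ 2) = 2 * phi c γ α Δ := by
    rw [sum_partition c (fun i => α (c i) * (γ i * ‖A i‖ ^ 2))]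
    have hj : ∀ j ∈ (Finset.univ : Finset (Fin k)),
        ∑ i ∈ clSet c j, α (c i) * (γ i * ‖A i‖ ^ 2)
          = α j * ∑ i ∈ clSet c j, γ i * ‖Δ i - glAvg c γ α Δ‖ ^ 2 := by
      intro j _
      rw [Finset.mul_sum]
      refine Finset.sum_congr rfl fun i hi => ?_
      have hci : c i = j := by simpa [clSet] using hi
      simp only [hA]
      rw [hci]
    rw [Finset.sum_congr rfl hj]
    unfold phi
    ring
  have hsum2 : ∑ i, (1 - α (c i)) * (γ i * ‖Bv i‖ ^ 2)
      = 2 * ∑ j, (1 - α j) * psi c γ j Δ := by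
    rw [sum_partition c (fun i => (1 - α (c i)) * (γ i * ‖Bv i‖ ^ 2))]
    have hj : ∀ j ∈ (Finset.univ : Finset (Fin k)),
        ∑ i ∈ clSet c j, (1 - α (c i)) * (γ i * ‖Bv i‖ ^ 2)
          = (1 - α j) * (2 * psi c γ j Δ) := by
      intro j _
      have hstep : ∑ i ∈ clSet c j, (1 - α (c i)) * (γ i * ‖Bv i‖ ^ 2)
          = ∑ i ∈ clSet c j, (1 - α j) * (γ i * ‖Δ i - clAvg c γ j Δ‖ ^ 2) := by
        refine Finset.sum_congr rfl fun i hi => ?_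
        have hci : c i = j := by simpa [clSet] using hi
        simp only [hB]
        rw [hci]
      rw [hstep, ← Finset.mul_sum]
      unfold psi
      ring
    rw [Finset.sum_congr rfl hj, Finset.mul_sum]
    exact Finset.sum_congr rfl fun j _ => by ring
  -- Bregman gap bound
  have hgap : phi c γ α Δ + (∑ j, (1 - α j) * psi c γ j Δ) + (∑ i, D i)
      ≤ objF c γ α f θ - objF c γ α f θstar := by
    have hid := objF_identity c γ α f θstar θ hWne hWgne
    rw [← hΔ] at hid
    have hfdecomp : ∑ i, (f i (θ i) - f i (θstar i))
        = ∑ i, D i + ∑ i, ⟪gradient (f i) (θstar i), θ i - θstar i⟫ := by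
      rw [← Finset.sum_add_distrib]
      refine Finset.sum_congr rfl fun i _ => ?_
      simp only [hDdef]
      ring
    set S : ℝ := (∑ i, ⟪gradient (f i) (θstar i), θ i - θstar i⟫)
      + ((∑ j, (1 - α j) * crossPsi c γ j θstar θ) + crossPhi c γ α θstar θ) with hSdef
    suffices hS : 0 ≤ S by linarith [hid, hfdecomp]
    set K : ℝ := (∑ j, (1 - α j) * psi c γ j Δ) + phi c γ α Δ
      + (L / 2) * ∑ i, ‖θ i - θstar i‖ ^ 2 with hKdef
    have hθeq : θstar + Δ = θ := by rw [hΔ]; abel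
    have hstep : ∀ t : ℝ, 0 < t → t ≤ 1 → 0 ≤ S + t * K := by
      intro t ht ht1
      have hmin' := hmin (θstar + t • Δ)
      have hidt := objF_identity c γ α f θstar (θstar + t • Δ) hWne hWgne
      have hsub : (θstar + t • Δ) - θstar = t • Δ := by abel
      rw [hsub] at hidt
      have hψt : ∑ j, (1 - α j) * psi c γ j (t • Δ)
          = t ^ 2 * ∑ j, (1 - α j) * psi c γ j Δ := by
        rw [Finset.mul_sum]
        exact Finset.sum_congr rfl fun j _ => by rw [psi_smul]; ring
      have hφt : phi c γ α (t • Δ) = t ^ 2 * phi c γ α Δ := phi_smul c γ α t Δ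
      have hCPt : ∑ j, (1 - α j) * crossPsi c γ j θstar (θstar + t • Δ)
          = t * ∑ j, (1 - α j) * crossPsi c γ j θstar θ := by
        rw [Finset.mul_sum]
        refine Finset.sum_congr rfl fun j _ => ?_
        rw [crossPsi_line, hθeq]
        ring
      have hCGt : crossPhi c γ α θstar (θstar + t • Δ)
          = t * crossPhi c γ α θstar θ := by
        rw [crossPhi_line, hθeq]
      rw [hψt, hφt, hCPt, hCGt] at hidt
      have hper : ∀ i ∈ (Finset.univ : Finset (Fin n)),
          f i ((θstar + t • Δ) i) - f i (θstar i)
            ≤ t * ⟪gradient (f i) (θstar i), θ i - θstar i⟫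
              + (t ^ 2 * (L / 2)) * ‖θ i - θstar i‖ ^ 2 := by
        intro i _
        have hd := descent_lemma (f i) (hdiff i) hL (hsm i) ((θstar + t • Δ) i) (θstar i)
        have hsub2 : (θstar + t • Δ) i - θstar i = t • Δ i := line_sub_apply θstar Δ t i
        rw [hsub2, real_inner_smul_right, norm_smul_sq] at hd
        have hΔi : Δ i = θ i - θstar i := by rw [hΔ, PiLp.sub_apply]
        rw [hΔi] at hd
        nlinarith [hd]
      have hfb : ∑ i, (f i ((θstar + t • Δ) i) - f i (θstar i))
          ≤ t * (∑ i, ⟪gradient (f i) (θstar i), θ i - θstar i⟫)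
            + (t ^ 2 * (L / 2)) * ∑ i, ‖θ i - θstar i‖ ^ 2 := by
        calc ∑ i, (f i ((θstar + t • Δ) i) - f i (θstar i))
            ≤ ∑ i, (t * ⟪gradient (f i) (θstar i), θ i - θstar i⟫
              + (t ^ 2 * (L / 2)) * ‖θ i - θstar i‖ ^ 2) := Finset.sum_le_sum hper
          _ = t * (∑ i, ⟪gradient (f i) (θstar i), θ i - θstar i⟫)
              + (t ^ 2 * (L / 2)) * ∑ i, ‖θ i - θstar i‖ ^ 2 := by
            rw [Finset.sum_add_distrib, ← Finset.mul_sum, ← Finset.mul_sum]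
      have hexp : t * (S + t * K)
          = (t * (∑ i, ⟪gradient (f i) (θstar i), θ i - θstar i⟫)
              + (t ^ 2 * (L / 2)) * ∑ i, ‖θ i - θstar i‖ ^ 2)
            + (t ^ 2 * ∑ j, (1 - α j) * psi c γ j Δ + t ^ 2 * phi c γ α Δ)
            + (t * ∑ j, (1 - α j) * crossPsi c γ j θstar θ
              + t * crossPhi c γ α θstar θ) := by
        rw [hSdef, hKdef]
        ring
      have h0 : 0 ≤ t * (S + t * K) := by
        rw [hexp]
        linarith [hmin', hidt, hfb]
      exact nonneg_of_mul_nonneg_right h0 ht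
    by_contra hneg
    push_neg at hneg
    have hK' : (0:ℝ) ≤ max K 0 := le_max_right _ _
    set t : ℝ := min 1 ((-S) / (2 * (max K 0 + 1))) with htdef
    have htpos : 0 < t :=
      lt_min one_pos (div_pos (by linarith) (by linarith))
    have ht1 : t ≤ 1 := min_le_left _ _
    have h := hstep t htpos ht1
    have h2 : t * K ≤ t * max K 0 :=
      mul_le_mul_of_nonneg_left (le_max_left _ _) htpos.le
    have h3 : t * max K 0 ≤ ((-S) / (2 * (max K 0 + 1))) * max K 0 :=
      mul_le_mul_of_nonneg_right (min_le_right _ _) hK'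
    have h4 : ((-S) / (2 * (max K 0 + 1))) * max K 0 < -S := by
      rw [div_mul_eq_mul_div, div_lt_iff₀ (by linarith)]
      nlinarith
    linarith
  -- nonnegativity facts
  have hphiN : 0 ≤ phi c γ α Δ := phi_nonneg c γ α Δ hγ hα
  have hpsiN : 0 ≤ ∑ j, (1 - α j) * psi c γ j Δ :=
    Finset.sum_nonneg fun j _ => mul_nonneg (by linarith [(hα j).2]) (psi_nonneg c γ j Δ hγ)
  have hDN : 0 ≤ ∑ i, D i := Finset.sum_nonneg fun i _ => hD i
  have hM1N : 0 ≤ M1 := by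
    rw [hM1]
    have h1 : α ⟨0, hk⟩ * γ (hc ⟨0, hk⟩).choose ≤
        (clSet c ⟨0, hk⟩).sup' (hc ⟨0, hk⟩) (fun i => α ⟨0, hk⟩ * γ i) :=
      Finset.le_sup' (fun i => α ⟨0, hk⟩ * γ i) (hc ⟨0, hk⟩).choose_spec
    have h2 := Finset.le_sup' (f := fun j => (clSet c j).sup' (hc j) fun i => α j * γ i)
      (Finset.mem_univ ⟨0, hk⟩)
    have h3 : 0 < α ⟨0, hk⟩ * γ (hc ⟨0, hk⟩).choose :=
      mul_pos (hα _).1 (hγ _)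
    have : (0:ℝ) < 2 / p0 := by positivity
    nlinarith
  have hMax1 : M1 ≤ max (max M1 M2) M3 := le_max_of_le_left (le_max_left _ _)
  have hMax2 : M2 ≤ max (max M1 M2) M3 := le_max_of_le_left (le_max_right _ _)
  have hMax3 : M3 ≤ max (max M1 M2) M3 := le_max_right _ _
  have hesLN : 0 ≤ max (max M1 M2) M3 := le_trans hM1N hMax1
  -- assemble
  rw [hE, hesL]
  calc ∑ i, (p0 * aT i + (1 - p0) * (p (c i) * bT i + (1 - p (c i)) * cT i))
      ≤ ∑ i, (M1 * (α (c i) * (γ i * ‖A i‖ ^ 2))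
          + M2 * ((1 - α (c i)) * (γ i * ‖Bv i‖ ^ 2)) + 2 * M3 * D i) :=
        Finset.sum_le_sum fun i _ => hbound i
    _ = M1 * (2 * phi c γ α Δ) + M2 * (2 * ∑ j, (1 - α j) * psi c γ j Δ)
          + 2 * M3 * (∑ i, D i) := by
        rw [Finset.sum_add_distrib, Finset.sum_add_distrib, ← Finset.mul_sum,
          ← Finset.mul_sum, ← Finset.mul_sum, hsum1, hsum2]
    _ ≤ max (max M1 M2) M3 * (2 * phi c γ α Δ)
          + max (max M1 M2) M3 * (2 * ∑ j, (1 - α j) * psi c γ j Δ)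
          + 2 * max (max M1 M2) M3 * (∑ i, D i) := by
        have := hphiN; have := hpsiN; have := hDN
        have h1 := mul_le_mul_of_nonneg_right hMax1 (by linarith : (0:ℝ) ≤ 2 * phi c γ α Δ)
        have h2 := mul_le_mul_of_nonneg_right hMax2
          (by linarith : (0:ℝ) ≤ 2 * ∑ j, (1 - α j) * psi c γ j Δ)
        have h3 := mul_le_mul_of_nonneg_right (by linarith [hMax3] :
          2 * M3 ≤ 2 * max (max M1 M2) M3) hDN
        linarith
    _ = 2 * max (max M1 M2) M3 * (phi c γ α Δ + (∑ j, (1 - α j) * psi c γ j Δ)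
          + (∑ i, D i)) := by ring
    _ ≤ 2 * max (max M1 M2) M3 * (objF c γ α f θ - objF c γ α f θstar) := by
        apply mul_le_mul_of_nonneg_left hgap
        linarith
end
end
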